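/- arXiv:2509.21604 — 4 statements merged into one kernel-verified Lean document; each statement's English description precedes it below -/
import Mathlib

section
/- Let $p < d - q$. Then there exists a constant $C$ such that for every $\delta \in (0, 1/2]$, $\int_{\Sigma_0 \cap B_\delta} |x|^{-p}\, d\mathcal{H}^{d-1}(x) \leq C\, \delta^{\,d - q - p}$, where $B_\delta \subset \mathbb{R}^d$ is the ball of radius $\delta$ centered at the origin. -/
open MeasureTheory Metric Real Set

open scoped ENNReal NNReal

lemma hausdorff_closedBall_le (m : ℕ) :
    ∃ κ : ℝ, 0 < κ ∧ ∀ (x : EuclideanSpace ℝ (Fin m)) (ρ : ℝ), 0 ≤ ρ →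
      μH[(m : ℝ)] (closedBall x ρ) ≤ ENNReal.ofReal (κ * ρ ^ m) := by
  refine ⟨((Real.sqrt m + 1) * 2) ^ m, by positivity, fun x ρ hρ => ?_⟩
  set K : ℝ≥0 := (Real.sqrt m).toNNReal with hK
  have hKcoe : (K : ℝ) = Real.sqrt m := Real.coe_toNNReal _ (Real.sqrt_nonneg _)
  set e : EuclideanSpace ℝ (Fin m) ≃ (Fin m → ℝ) := WithLp.equiv 2 (Fin m → ℝ) with he
  have hg : LipschitzWith K (fun y : Fin m → ℝ => e.symm y) := by
    apply LipschitzWith.of_dist_le_mul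
    intro y z
    have h1 : dist (e.symm y) (e.symm z) = Real.sqrt (∑ i, dist (y i) (z i) ^ 2) := by
      rw [EuclideanSpace.dist_eq]
      rfl
    rw [h1, hKcoe]
    have h2 : ∑ i, dist (y i) (z i) ^ 2 ≤ (m : ℝ) * dist y z ^ 2 := by
      calc ∑ i, dist (y i) (z i) ^ 2 ≤ ∑ _i : Fin m, dist y z ^ 2 := by
            apply Finset.sum_le_sum
            intro i _
            exact pow_le_pow_left₀ dist_nonneg (dist_le_pi_dist y z i) 2
        _ = (m : ℝ) * dist y z ^ 2 := by simp [Finset.sum_const, mul_comm]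
    calc Real.sqrt (∑ i, dist (y i) (z i) ^ 2) ≤ Real.sqrt ((m : ℝ) * dist y z ^ 2) :=
          Real.sqrt_le_sqrt h2
      _ = Real.sqrt m * dist y z := by
          rw [Real.sqrt_mul (Nat.cast_nonneg m), Real.sqrt_sq dist_nonneg]
  have hincl : closedBall x ρ ⊆ (fun y : Fin m → ℝ => e.symm y) '' closedBall (e x) ρ := by
    intro y hy
    refine ⟨e y, ?_, by simp⟩
    rw [mem_closedBall, dist_pi_le_iff hρ]
    intro i
    have : dist (e y i) (e x i) ≤ dist y x := by
      have h3 : dist y x = Real.sqrt (∑ i, dist (y i) (x i) ^ 2) := EuclideanSpace.dist_eq y x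
      have h4 : dist (y i) (x i) ^ 2 ≤ ∑ j, dist (y j) (x j) ^ 2 :=
        Finset.single_le_sum (f := fun j => dist (y j) (x j) ^ 2)
          (fun j _ => sq_nonneg _) (Finset.mem_univ i)
      have := Real.sqrt_le_sqrt h4
      rw [Real.sqrt_sq dist_nonneg] at this
      rw [h3]
      exact this
    exact le_trans this (mem_closedBall.mp hy)
  have hm0 : (0 : ℝ) ≤ (m : ℝ) := Nat.cast_nonneg m
  calc μH[(m : ℝ)] (closedBall x ρ)
      ≤ μH[(m : ℝ)] ((fun y : Fin m → ℝ => e.symm y) '' closedBall (e x) ρ) :=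
        measure_mono hincl
    _ ≤ (K : ℝ≥0∞) ^ (m : ℝ) * μH[(m : ℝ)] (closedBall (e x) ρ) :=
        hg.hausdorffMeasure_image_le hm0 _
    _ = (K : ℝ≥0∞) ^ (m : ℝ) * volume (closedBall (e x) ρ) := by
        congr 1
        have : (μH[(m : ℝ)] : Measure (Fin m → ℝ)) = volume := by
          have := MeasureTheory.hausdorffMeasure_pi_real (ι := Fin m)
          simpa using this
        rw [this]
    _ ≤ ENNReal.ofReal (((Real.sqrt m + 1) * 2) ^ m * ρ ^ m) := by
        rw [Real.volume_pi_closedBall _ hρ]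
        have hco : (K : ℝ≥0∞) = ENNReal.ofReal (Real.sqrt m) := rfl
        rw [hco, ENNReal.rpow_natCast, ← ENNReal.ofReal_pow (Real.sqrt_nonneg _),
          Fintype.card_fin, ← ENNReal.ofReal_mul (by positivity)]
        apply ENNReal.ofReal_le_ofReal
        have h5 : Real.sqrt m ^ m * (2 * ρ) ^ m = (Real.sqrt m * (2 * ρ)) ^ m :=
          (mul_pow _ _ _).symm
        have h6 : ((Real.sqrt m + 1) * 2) ^ m * ρ ^ m = ((Real.sqrt m + 1) * 2 * ρ) ^ m :=
          (mul_pow _ _ _).symm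
        rw [h5, h6]
        apply pow_le_pow_left₀ (by positivity)
        nlinarith [Real.sqrt_nonneg (m : ℝ)]

lemma hausdorff_le_antilip {X Y : Type*} [MetricSpace X] [Nonempty X] [MeasurableSpace X]
    [BorelSpace X] [MetricSpace Y] [MeasurableSpace Y] [BorelSpace Y]
    (f : X → Y) (s : Set X) (K : ℝ≥0) {m : ℝ} (hm : 0 ≤ m)
    (hK : ∀ x ∈ s, ∀ y ∈ s, dist x y ≤ K * dist (f x) (f y)) :
    μH[m] s ≤ (K : ℝ≥0∞) ^ m * μH[m] (f '' s) := by
  set g : Y → X := Function.invFunOn f s with hg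
  have hmem : ∀ b ∈ f '' s, g b ∈ s ∧ f (g b) = b := by
    rintro b ⟨a, ha, rfl⟩
    exact ⟨Function.invFunOn_mem ⟨a, ha, rfl⟩, Function.invFunOn_eq ⟨a, ha, rfl⟩⟩
  have hlip : LipschitzOnWith K g (f '' s) := by
    rw [lipschitzOnWith_iff_dist_le_mul]
    intro a ha b hb
    have h1 := hK _ (hmem a ha).1 _ (hmem b hb).1
    rwa [(hmem a ha).2, (hmem b hb).2] at h1
  have hsub : s ⊆ g '' (f '' s) := by
    intro z hz
    have h1 : f z ∈ f '' s := ⟨z, hz, rfl⟩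
    have h2 := hK z hz _ (hmem _ h1).1
    rw [(hmem _ h1).2, dist_self, mul_zero] at h2
    have h3 : z = g (f z) := by
      have := dist_le_zero.mp h2
      exact this
    exact ⟨f z, h1, h3.symm⟩
  calc μH[m] s ≤ μH[m] (g '' (f '' s)) := measure_mono hsub
    _ ≤ (K : ℝ≥0∞) ^ m * μH[m] (f '' s) := hlip.hausdorffMeasure_image_le hm

set_option maxHeartbeats 1000000 in
lemma ball_level_bound (d : ℕ) (hd : 1 ≤ d) :
    ∃ κ : ℝ, 0 < κ ∧ ∀ (Ω : EuclideanSpace ℝ (Fin d) → ℝ), Differentiable ℝ Ω →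
      ∀ (x₀ : EuclideanSpace ℝ (Fin d)) (ρ : ℝ), 0 ≤ ρ → gradient Ω x₀ ≠ 0 →
      (∀ x ∈ ball x₀ ρ, ‖gradient Ω x - gradient Ω x₀‖ ≤ ‖gradient Ω x₀‖ / 4) →
      μH[(d : ℝ) - 1] ({x | Ω x = 0} ∩ ball x₀ ρ) ≤ ENNReal.ofReal (κ * ρ ^ (d - 1)) := by
  classical
  obtain ⟨κ₀, hκ₀, hκA⟩ := hausdorff_closedBall_le (d - 1)
  have hcast : ((d - 1 : ℕ) : ℝ) = (d : ℝ) - 1 := by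
    rw [Nat.cast_sub hd, Nat.cast_one]
  refine ⟨2 ^ (d - 1) * κ₀, by positivity, fun Ω hΩ x₀ ρ hρ hne hvar => ?_⟩
  have hGpos : 0 < ‖gradient Ω x₀‖ := norm_pos_iff.mpr hne
  set n₀ : EuclideanSpace ℝ (Fin d) := ‖gradient Ω x₀‖⁻¹ • gradient Ω x₀ with hn₀
  have hn₀norm : ‖n₀‖ = 1 := norm_smul_inv_norm hne
  have hn₀ne : n₀ ≠ 0 := by
    intro h; rw [h, norm_zero] at hn₀norm; exact one_ne_zero hn₀norm.symm
  -- the inner product characterization of the derivative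
  have hdual : ∀ u : EuclideanSpace ℝ (Fin d),
      (fderiv ℝ Ω x₀) u = inner ℝ (gradient Ω x₀) u := by
    intro u
    have h1 : gradient Ω x₀
        = (InnerProductSpace.toDual ℝ (EuclideanSpace ℝ (Fin d))).symm (fderiv ℝ Ω x₀) := rfl
    rw [h1, ← InnerProductSpace.toDual_apply_apply]
    congr 1
    exact ((InnerProductSpace.toDual ℝ _).apply_symm_apply (fderiv ℝ Ω x₀)).symm
  -- mean value estimate
  have hmvt : ∀ z ∈ {x | Ω x = 0} ∩ ball x₀ ρ, ∀ w ∈ {x | Ω x = 0} ∩ ball x₀ ρ,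
      |(fderiv ℝ Ω x₀) (z - w)| ≤ ‖gradient Ω x₀‖ / 4 * ‖z - w‖ := by
    intro z hz w hw
    have hφdiff : ∀ x ∈ ball x₀ ρ,
        DifferentiableAt ℝ (fun y => Ω y - (fderiv ℝ Ω x₀) y) x := fun x _ =>
      ((hΩ x).sub ((fderiv ℝ Ω x₀).differentiableAt))
    have hφbound : ∀ x ∈ ball x₀ ρ,
        ‖fderiv ℝ (fun y => Ω y - (fderiv ℝ Ω x₀) y) x‖ ≤ ‖gradient Ω x₀‖ / 4 := by
      intro x hx
      have h1 := fderiv_sub (𝕜 := ℝ) (hΩ x) ((fderiv ℝ Ω x₀).differentiableAt (x := x))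
      rw [(fderiv ℝ Ω x₀).fderiv] at h1
      rw [show (fun y => Ω y - (fderiv ℝ Ω x₀) y) = Ω - ⇑(fderiv ℝ Ω x₀) from rfl, h1]
      have h2 : gradient Ω x - gradient Ω x₀ =
          (InnerProductSpace.toDual ℝ (EuclideanSpace ℝ (Fin d))).symm
            (fderiv ℝ Ω x - fderiv ℝ Ω x₀) := by
        rw [map_sub]; rfl
      have h3 : ‖fderiv ℝ Ω x - fderiv ℝ Ω x₀‖ = ‖gradient Ω x - gradient Ω x₀‖ := by
        rw [h2, LinearIsometryEquiv.norm_map]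
      rw [h3]
      exact hvar x hx
    have hkey := Convex.norm_image_sub_le_of_norm_fderiv_le hφdiff hφbound
      (convex_ball x₀ ρ) hw.2 hz.2
    have h4 : (Ω z - (fderiv ℝ Ω x₀) z) - (Ω w - (fderiv ℝ Ω x₀) w)
        = -((fderiv ℝ Ω x₀) (z - w)) := by
      have hz0 : Ω z = 0 := hz.1
      have hw0 : Ω w = 0 := hw.1
      rw [map_sub, hz0, hw0]; ring
    rw [h4, norm_neg] at hkey
    exact hkey
  -- the hyperplane and projection
  haveI : Fact (Module.finrank ℝ (EuclideanSpace ℝ (Fin d)) = (d - 1) + 1) := ⟨by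
    rw [finrank_euclideanSpace_fin]; omega⟩
  set P : Submodule ℝ (EuclideanSpace ℝ (Fin d)) := (Submodule.span ℝ {n₀})ᗮ with hP
  have hfrk : Module.finrank ℝ P = d - 1 := Submodule.finrank_orthogonal_span_singleton hn₀ne
  set B₀ := (stdOrthonormalBasis ℝ P).reindex (finCongr hfrk) with hB₀
  set F : EuclideanSpace ℝ (Fin d) → EuclideanSpace ℝ (Fin (d - 1)) :=
    fun u => B₀.repr (P.orthogonalProjectionOnto u) with hF
  -- Pythagoras
  have hpyth : ∀ u : EuclideanSpace ℝ (Fin d),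
      ‖(P.orthogonalProjectionOnto u : EuclideanSpace ℝ (Fin d))‖ ^ 2 + (inner ℝ n₀ u : ℝ) ^ 2
        = ‖u‖ ^ 2 := by
    intro u
    have hdecomp : ((Submodule.span ℝ {n₀}).orthogonalProjectionOnto u : EuclideanSpace ℝ (Fin d))
        + (P.orthogonalProjectionOnto u : EuclideanSpace ℝ (Fin d)) = u :=
      Submodule.starProjection_add_starProjection_orthogonal (K := Submodule.span ℝ {n₀}) u
    have hinner : (inner ℝ (((Submodule.span ℝ {n₀}).orthogonalProjectionOnto u :
        EuclideanSpace ℝ (Fin d))) ((P.orthogonalProjectionOnto u : EuclideanSpace ℝ (Fin d))) : ℝ)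
          = 0 := by
      apply Submodule.inner_right_of_mem_orthogonal (K := Submodule.span ℝ {n₀})
      · exact SetLike.coe_mem _
      · exact SetLike.coe_mem _
    have hnorm : ‖u‖ ^ 2
        = ‖((Submodule.span ℝ {n₀}).orthogonalProjectionOnto u : EuclideanSpace ℝ (Fin d))‖ ^ 2
          + ‖(P.orthogonalProjectionOnto u : EuclideanSpace ℝ (Fin d))‖ ^ 2 := by
      conv_lhs => rw [← hdecomp]
      rw [norm_add_sq_real, hinner]
      ring
    have hanorm : ‖((Submodule.span ℝ {n₀}).orthogonalProjectionOnto u :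
        EuclideanSpace ℝ (Fin d))‖ ^ 2 = (inner ℝ n₀ u : ℝ) ^ 2 := by
      rw [← Submodule.starProjection_apply, Submodule.starProjection_singleton, norm_smul, hn₀norm]
      simp [Real.norm_eq_abs, sq_abs, mul_pow]
    rw [hnorm, hanorm]
    ring
  have hprojle : ∀ u : EuclideanSpace ℝ (Fin d),
      ‖(P.orthogonalProjectionOnto u : EuclideanSpace ℝ (Fin d))‖ ≤ ‖u‖ := by
    intro u
    have h1 := hpyth u
    have h2 : ‖(P.orthogonalProjectionOnto u : EuclideanSpace ℝ (Fin d))‖ ^ 2 ≤ ‖u‖ ^ 2 := by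
      nlinarith [sq_nonneg (inner ℝ n₀ u : ℝ)]
    have := Real.sqrt_le_sqrt h2
    rwa [Real.sqrt_sq (norm_nonneg _), Real.sqrt_sq (norm_nonneg _)] at this
  have hFdiff : ∀ u v : EuclideanSpace ℝ (Fin d),
      dist (F u) (F v) = ‖(P.orthogonalProjectionOnto (u - v) : EuclideanSpace ℝ (Fin d))‖ := by
    intro u v
    rw [dist_eq_norm, hF]
    have h1 : B₀.repr (P.orthogonalProjectionOnto u) - B₀.repr (P.orthogonalProjectionOnto v)
        = B₀.repr (P.orthogonalProjectionOnto (u - v)) := by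
      rw [← map_sub, ← map_sub]
    simp only []
    rw [h1, LinearIsometryEquiv.norm_map, Submodule.norm_coe]
  have hFlip : ∀ u v : EuclideanSpace ℝ (Fin d), dist (F u) (F v) ≤ dist u v := by
    intro u v
    rw [hFdiff, dist_eq_norm]
    exact hprojle _
  -- the expansion bound on the level set
  have hexp : ∀ z ∈ {x | Ω x = 0} ∩ ball x₀ ρ, ∀ w ∈ {x | Ω x = 0} ∩ ball x₀ ρ,
      dist z w ≤ ((2 : ℝ≥0) : ℝ) * dist (F z) (F w) := by
    intro z hz w hw
    have h1 := hmvt z hz w hw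
    have h2 : |(inner ℝ n₀ (z - w) : ℝ)| ≤ ‖z - w‖ / 4 := by
      have h3 : (inner ℝ n₀ (z - w) : ℝ)
          = ‖gradient Ω x₀‖⁻¹ * (inner ℝ (gradient Ω x₀) (z - w) : ℝ) := by
        rw [hn₀, real_inner_smul_left]
      rw [h3, ← hdual, abs_mul, abs_inv, abs_of_pos hGpos]
      calc ‖gradient Ω x₀‖⁻¹ * |(fderiv ℝ Ω x₀) (z - w)|
          ≤ ‖gradient Ω x₀‖⁻¹ * (‖gradient Ω x₀‖ / 4 * ‖z - w‖) :=
            mul_le_mul_of_nonneg_left h1 (by positivity)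
        _ = ‖z - w‖ / 4 := by field_simp
    have h4 := hpyth (z - w)
    have h5 : ‖z - w‖ ^ 2
        ≤ (2 * ‖(P.orthogonalProjectionOnto (z - w) : EuclideanSpace ℝ (Fin d))‖) ^ 2 := by
      nlinarith [abs_nonneg (inner ℝ n₀ (z - w) : ℝ), sq_abs (inner ℝ n₀ (z - w) : ℝ),
        norm_nonneg (z - w)]
    have h6 : ‖z - w‖ ≤ 2 * ‖(P.orthogonalProjectionOnto (z - w) : EuclideanSpace ℝ (Fin d))‖ := by
      have := Real.sqrt_le_sqrt h5
      rwa [Real.sqrt_sq (norm_nonneg _), Real.sqrt_sq (by positivity)] at this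
    rw [dist_eq_norm, hFdiff]
    push_cast
    exact h6
  have hm : (0 : ℝ) ≤ (d : ℝ) - 1 := by
    have : (1 : ℝ) ≤ (d : ℝ) := by exact_mod_cast hd
    linarith
  have hmain := hausdorff_le_antilip F ({x | Ω x = 0} ∩ ball x₀ ρ) 2 hm hexp
  have himg : F '' ({x | Ω x = 0} ∩ ball x₀ ρ) ⊆ closedBall (F x₀) ρ := by
    rintro y ⟨z, hz, rfl⟩
    rw [mem_closedBall]
    calc dist (F z) (F x₀) ≤ dist z x₀ := hFlip _ _
      _ ≤ ρ := le_of_lt (mem_ball.mp hz.2)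
  have hstep : μH[(d : ℝ) - 1] (F '' ({x | Ω x = 0} ∩ ball x₀ ρ))
      ≤ ENNReal.ofReal (κ₀ * ρ ^ (d - 1)) := by
    refine le_trans (measure_mono himg) ?_
    rw [← hcast]
    exact hκA _ _ hρ
  refine le_trans hmain (le_trans (mul_le_mul_right hstep _) ?_)
  have h7 : (((2 : ℝ≥0)) : ℝ≥0∞) ^ ((d : ℝ) - 1) = ENNReal.ofReal (2 ^ (d - 1)) := by
    rw [← hcast, ENNReal.rpow_natCast, ENNReal.ofReal_pow (by norm_num : (0:ℝ) ≤ 2)]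
    norm_num
  rw [h7, ← ENNReal.ofReal_mul (by positivity)]
  apply ENNReal.ofReal_le_ofReal
  rw [mul_assoc]

lemma packing_count {d : ℕ} (t : Finset (EuclideanSpace ℝ (Fin d))) {R ρ : ℝ} (hρ : 0 < ρ)
    (hts : ∀ x ∈ t, x ∈ closedBall (0 : EuclideanSpace ℝ (Fin d)) R)
    (hsep : (↑t : Set (EuclideanSpace ℝ (Fin d))).Pairwise fun a b => ρ ≤ dist a b) :
    (t.card : ℝ≥0∞) * volume (ball (0 : EuclideanSpace ℝ (Fin d)) (ρ / 2))
      ≤ volume (closedBall (0 : EuclideanSpace ℝ (Fin d)) (R + ρ)) := by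
  have hdisj : (↑t : Set (EuclideanSpace ℝ (Fin d))).PairwiseDisjoint
      (fun x => ball x (ρ / 2)) := by
    intro a ha b hb hab
    exact ball_disjoint_ball (by linarith [hsep ha hb hab])
  have hmeas : ∀ b ∈ t, MeasurableSet (ball b (ρ / 2)) := fun b _ => measurableSet_ball
  have hsum := measure_biUnion_finset hdisj hmeas (μ := volume)
  have hcard : ∑ x ∈ t, volume (ball x (ρ / 2)) = (t.card : ℝ≥0∞)
      * volume (ball (0 : EuclideanSpace ℝ (Fin d)) (ρ / 2)) := by
    rw [Finset.sum_congr rfl (fun x _ => Measure.addHaar_ball_center volume x (ρ / 2))]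
    rw [Finset.sum_const, nsmul_eq_mul]
  have hsub : (⋃ x ∈ t, ball x (ρ / 2)) ⊆ closedBall (0 : EuclideanSpace ℝ (Fin d)) (R + ρ) := by
    intro y hy
    simp only [mem_iUnion, exists_prop] at hy
    obtain ⟨x, hx, hyx⟩ := hy
    rw [mem_closedBall]
    calc dist y 0 ≤ dist y x + dist x 0 := dist_triangle _ _ _
      _ ≤ ρ / 2 + R := add_le_add (le_of_lt (mem_ball.mp hyx)) (mem_closedBall.mp (hts x hx))
      _ ≤ R + ρ := by linarith
  calc (t.card : ℝ≥0∞) * volume (ball (0 : EuclideanSpace ℝ (Fin d)) (ρ / 2))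
      = ∑ x ∈ t, volume (ball x (ρ / 2)) := hcard.symm
    _ = volume (⋃ x ∈ t, ball x (ρ / 2)) := hsum.symm
    _ ≤ volume (closedBall (0 : EuclideanSpace ℝ (Fin d)) (R + ρ)) := measure_mono hsub

lemma exists_net {d : ℕ} (s : Set (EuclideanSpace ℝ (Fin d))) {R ρ : ℝ} (hρ : 0 < ρ)
    (hR : 0 < R) (hs : s ⊆ closedBall (0 : EuclideanSpace ℝ (Fin d)) R) :
    ∃ t : Finset (EuclideanSpace ℝ (Fin d)), ↑t ⊆ s ∧ (s ⊆ ⋃ x ∈ t, ball x ρ) ∧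
      (t.card : ℝ≥0∞) * volume (ball (0 : EuclideanSpace ℝ (Fin d)) (ρ / 2))
        ≤ volume (closedBall (0 : EuclideanSpace ℝ (Fin d)) (R + ρ)) := by
  classical
  set 𝒜 : Set (Set (EuclideanSpace ℝ (Fin d))) :=
    {u | u ⊆ s ∧ u.Pairwise fun a b => ρ ≤ dist a b} with h𝒜
  obtain ⟨u, hu, humax⟩ : ∃ u, Maximal (fun x => x ∈ 𝒜) u := by
    apply zorn_subset
    intro c hc hchain
    refine ⟨⋃₀ c, ⟨?_, ?_⟩, fun v hv => subset_sUnion_of_mem hv⟩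
    · intro x hx
      obtain ⟨v, hv, hxv⟩ := hx
      exact (hc hv).1 hxv
    · intro a ha b hb hab
      obtain ⟨va, hva, hava⟩ := ha
      obtain ⟨vb, hvb, hbvb⟩ := hb
      rcases hchain.total hva hvb with h | h
      · exact (hc hvb).2 (h hava) hbvb hab
      · exact (hc hva).2 hava (h hbvb) hab
  have husub : u ⊆ s := hu.1
  have husep : u.Pairwise fun a b => ρ ≤ dist a b := hu.2
  -- u is finite
  have hucard : ∀ v : Finset (EuclideanSpace ℝ (Fin d)), ↑v ⊆ u →
      (v.card : ℝ≥0∞) * volume (ball (0 : EuclideanSpace ℝ (Fin d)) (ρ / 2))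
        ≤ volume (closedBall (0 : EuclideanSpace ℝ (Fin d)) (R + ρ)) := by
    intro v hv
    apply packing_count v hρ
    · exact fun x hx => hs (husub (hv hx))
    · exact husep.mono hv
  set β : ℝ≥0∞ := volume (closedBall (0 : EuclideanSpace ℝ (Fin d)) (R + ρ))
    / volume (ball (0 : EuclideanSpace ℝ (Fin d)) (ρ / 2)) with hβ
  have hvol_pos : volume (ball (0 : EuclideanSpace ℝ (Fin d)) (ρ / 2)) ≠ 0 :=
    (measure_ball_pos volume _ (by linarith)).ne'
  have hvol_fin : volume (ball (0 : EuclideanSpace ℝ (Fin d)) (ρ / 2)) ≠ ∞ :=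
    measure_ball_lt_top.ne
  have hβfin : β ≠ ∞ := by
    rw [hβ]
    exact (ENNReal.div_lt_top measure_closedBall_lt_top.ne hvol_pos).ne
  have hucard' : ∀ v : Finset (EuclideanSpace ℝ (Fin d)), ↑v ⊆ u → (v.card : ℝ≥0∞) ≤ β := by
    intro v hv
    rw [hβ, ENNReal.le_div_iff_mul_le (Or.inl hvol_pos) (Or.inl hvol_fin)]
    exact hucard v hv
  have hufin : u.Finite := by
    by_contra hinf
    have hinfu : u.Infinite := hinf
    obtain ⟨v, hvu, hvcard⟩ := hinfu.exists_subset_card_eq (⌈β.toReal⌉₊ + 1)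
    have h1 := hucard' v hvu
    have h2 : ((v.card : ℕ) : ℝ) ≤ β.toReal := by
      have := ENNReal.toReal_mono hβfin h1
      rwa [ENNReal.toReal_natCast] at this
    rw [hvcard] at h2
    have h3 : (⌈β.toReal⌉₊ : ℝ) + 1 ≤ β.toReal := by push_cast at h2 ⊢; linarith
    have h4 := Nat.le_ceil β.toReal
    linarith
  set t := hufin.toFinset with ht
  have htu : (↑t : Set (EuclideanSpace ℝ (Fin d))) = u := hufin.coe_toFinset
  refine ⟨t, by rw [htu]; exact husub, ?_, by
    apply hucard
    rw [htu]⟩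
  -- covering by maximality
  intro y hy
  by_contra hyn
  have hyfar : ∀ x ∈ u, ρ ≤ dist y x := by
    intro x hx
    by_contra hlt
    push_neg at hlt
    apply hyn
    simp only [mem_iUnion, exists_prop]
    exact ⟨x, by rw [← Finset.mem_coe, htu]; exact hx, mem_ball.mpr hlt⟩
  have hyu : y ∉ u := by
    intro hyu
    apply hyn
    simp only [mem_iUnion, exists_prop]
    exact ⟨y, by rw [← Finset.mem_coe, htu]; exact hyu, mem_ball_self hρ⟩
  have hins : insert y u ∈ 𝒜 := by
    constructor
    · exact insert_subset hy husub
    · apply husep.insert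
      intro b hb hyb
      exact ⟨hyfar b hb, by rw [dist_comm]; exact hyfar b hb⟩
  have := humax hins (subset_insert y u)
  exact hyu (this (mem_insert y u))

set_option maxHeartbeats 1000000 in
lemma shell_bound {d : ℕ} (hd : 1 ≤ d) (q : ℝ) (hq : 1 ≤ q)
    (D : Set (EuclideanSpace ℝ (Fin d)))
    (Ω : EuclideanSpace ℝ (Fin d) → ℝ) (hΩ : ContDiff ℝ 5 Ω)
    (c : ℝ) (hc : 0 < c)
    (hgrad : ∀ x ∈ D, c * ‖x‖ ^ q ≤ ‖gradient Ω x‖)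
    (hDball : D ⊆ ball 0 1) :
    ∃ C₁ : ℝ, 0 < C₁ ∧ ∀ r : ℝ, 0 < r → r ≤ 1 / 2 →
      μH[(d : ℝ) - 1] ({y ∈ D | Ω y = 0} ∩ {x | r / 2 ≤ ‖x‖ ∧ ‖x‖ ≤ r})
        ≤ ENNReal.ofReal (C₁ * r ^ ((d : ℝ) - q)) := by
  classical
  -- differentiability facts
  have hΩdiff : Differentiable ℝ Ω := hΩ.differentiable (by norm_num)
  have hf'cd : ContDiff ℝ 1 (fderiv ℝ Ω) := hΩ.fderiv_right (by norm_num)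
  have hf'diff : Differentiable ℝ (fderiv ℝ Ω) := hf'cd.differentiable (by norm_num)
  have hf''cont : Continuous fun x => ‖fderiv ℝ (fderiv ℝ Ω) x‖ :=
    (hf'cd.continuous_fderiv (by norm_num)).norm
  -- bound on the second derivative on the ball of radius 2
  obtain ⟨K₀, hK₀⟩ := (isCompact_closedBall (0 : EuclideanSpace ℝ (Fin d)) 2).exists_bound_of_continuousOn
    hf''cont.continuousOn
  set K : ℝ := max K₀ 0 with hK
  have hKnonneg : 0 ≤ K := le_max_right _ _
  have hKbound : ∀ x ∈ closedBall (0 : EuclideanSpace ℝ (Fin d)) 2,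
      ‖fderiv ℝ (fderiv ℝ Ω) x‖ ≤ K := by
    intro x hx
    have h := hK₀ x hx
    replace h : ‖fderiv ℝ (fderiv ℝ Ω) x‖ ≤ K₀ :=
      (le_abs_self _).trans ((Real.norm_eq_abs _).symm.trans_le h)
    exact le_trans h (le_max_left _ _)
  -- Lipschitz bound for the gradient on the ball of radius 2
  have hgradlip : ∀ x ∈ closedBall (0 : EuclideanSpace ℝ (Fin d)) 2,
      ∀ y ∈ closedBall (0 : EuclideanSpace ℝ (Fin d)) 2,
      ‖gradient Ω x - gradient Ω y‖ ≤ K * ‖x - y‖ := by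
    intro x hx y hy
    have h1 : ‖fderiv ℝ Ω x - fderiv ℝ Ω y‖ ≤ K * ‖x - y‖ :=
      Convex.norm_image_sub_le_of_norm_fderiv_le (fun z _ => hf'diff z) hKbound
        (convex_closedBall _ _) hy hx
    have h2 : gradient Ω x - gradient Ω y =
        (InnerProductSpace.toDual ℝ (EuclideanSpace ℝ (Fin d))).symm
          (fderiv ℝ Ω x - fderiv ℝ Ω y) := by
      rw [map_sub]; rfl
    rw [h2, LinearIsometryEquiv.norm_map]
    exact h1
  obtain ⟨κ, hκpos, hκ⟩ := ball_level_bound d hd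
  -- the constant
  set c₃ : ℝ := min 1 (c / 2 ^ q / (4 * (K + 1))) with hc₃
  have hc₃pos : 0 < c₃ := by
    apply lt_min one_pos
    have h2q : (0:ℝ) < 2 ^ q := Real.rpow_pos_of_pos (by norm_num) q
    positivity
  refine ⟨6 ^ d * κ * 2 / c₃, by positivity, fun r hr hr2 => ?_⟩
  -- the radius of the small balls
  set ρ₀ : ℝ := min r (c * (r / 2) ^ q / (4 * (K + 1))) with hρ₀
  have hrq : (0:ℝ) < (r / 2) ^ q := Real.rpow_pos_of_pos (by linarith) q
  have hρ₀pos : 0 < ρ₀ := by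
    apply lt_min hr
    positivity
  have hρ₀r : ρ₀ ≤ r := min_le_left _ _
  have hρ₀K : K * ρ₀ ≤ c * (r / 2) ^ q / 4 := by
    calc K * ρ₀ ≤ K * (c * (r / 2) ^ q / (4 * (K + 1))) :=
          mul_le_mul_of_nonneg_left (min_le_right _ _) hKnonneg
      _ ≤ c * (r / 2) ^ q / 4 := by
          have h48 : (0:ℝ) < 4 * (K + 1) := by positivity
          have heq : K * (c * (r / 2) ^ q / (4 * (K + 1)))
              = K * (c * (r / 2) ^ q) / (4 * (K + 1)) := by ring
          rw [heq, div_le_div_iff₀ h48 (by norm_num : (0:ℝ) < 4)]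
          nlinarith [hrq, hc.le, hKnonneg]
  -- lower bound ρ₀ ≥ c₃ * r ^ q
  have hρ₀low : c₃ * r ^ q ≤ ρ₀ := by
    have hrq_le_r : r ^ q ≤ r := by
      calc r ^ q ≤ r ^ (1:ℝ) := Real.rpow_le_rpow_of_exponent_ge hr (by linarith) hq
        _ = r := Real.rpow_one r
    have h1 : c₃ * r ^ q ≤ 1 * r := by
      apply mul_le_mul (min_le_left _ _) hrq_le_r (Real.rpow_nonneg hr.le q) zero_le_one
    have h2 : c₃ * r ^ q ≤ c / 2 ^ q / (4 * (K + 1)) * r ^ q :=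
      mul_le_mul_of_nonneg_right (min_le_right _ _) (Real.rpow_nonneg hr.le q)
    have h3 : c / 2 ^ q / (4 * (K + 1)) * r ^ q = c * (r / 2) ^ q / (4 * (K + 1)) := by
      rw [Real.div_rpow hr.le (by norm_num : (0:ℝ) ≤ 2)]
      field_simp
    apply le_min (by linarith)
    rw [← h3]
    exact h2
  -- the shell piece
  set piece : Set (EuclideanSpace ℝ (Fin d)) :=
    {y ∈ D | Ω y = 0} ∩ {x | r / 2 ≤ ‖x‖ ∧ ‖x‖ ≤ r} with hpiece
  have hpiece_sub : piece ⊆ closedBall (0 : EuclideanSpace ℝ (Fin d)) r := by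
    intro x hx
    rw [mem_closedBall, dist_zero_right]
    exact hx.2.2
  obtain ⟨t, hts, hcover, hcard⟩ := exists_net piece hρ₀pos hr hpiece_sub
  -- per-ball bound
  have hperball : ∀ x ∈ t, μH[(d : ℝ) - 1] ({y | Ω y = 0} ∩ ball x ρ₀)
      ≤ ENNReal.ofReal (κ * ρ₀ ^ (d - 1)) := by
    intro x hxt
    have hxp : x ∈ piece := hts hxt
    have hxD : x ∈ D := hxp.1.1
    have hxr : r / 2 ≤ ‖x‖ := hxp.2.1
    have hxr2 : ‖x‖ ≤ r := hxp.2.2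
    have hgx : c * (r / 2) ^ q ≤ ‖gradient Ω x‖ := by
      calc c * (r / 2) ^ q ≤ c * ‖x‖ ^ q := by
            apply mul_le_mul_of_nonneg_left _ hc.le
            exact Real.rpow_le_rpow (by linarith) hxr (by linarith)
        _ ≤ ‖gradient Ω x‖ := hgrad x hxD
    have hgne : gradient Ω x ≠ 0 := by
      intro h0
      rw [h0, norm_zero] at hgx
      nlinarith [hrq, hc]
    have hmem2 : ∀ z ∈ ball x ρ₀, z ∈ closedBall (0 : EuclideanSpace ℝ (Fin d)) 2 := by
      intro z hz
      rw [mem_closedBall, dist_zero_right]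
      have h1 : ‖z - x‖ < ρ₀ := by rwa [mem_ball, dist_eq_norm] at hz
      calc ‖z‖ = ‖z - x + x‖ := by rw [sub_add_cancel]
        _ ≤ ‖z - x‖ + ‖x‖ := norm_add_le _ _
        _ ≤ ρ₀ + r := by linarith
        _ ≤ 2 := by linarith
    have hxmem2 : x ∈ closedBall (0 : EuclideanSpace ℝ (Fin d)) 2 := by
      rw [mem_closedBall, dist_zero_right]; linarith
    have hvar : ∀ z ∈ ball x ρ₀, ‖gradient Ω z - gradient Ω x‖ ≤ ‖gradient Ω x‖ / 4 := by
      intro z hz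
      have h1 : ‖z - x‖ < ρ₀ := by rwa [mem_ball, dist_eq_norm] at hz
      calc ‖gradient Ω z - gradient Ω x‖ ≤ K * ‖z - x‖ := hgradlip z (hmem2 z hz) x hxmem2
        _ ≤ K * ρ₀ := mul_le_mul_of_nonneg_left h1.le hKnonneg
        _ ≤ c * (r / 2) ^ q / 4 := hρ₀K
        _ ≤ ‖gradient Ω x‖ / 4 := by linarith
    exact hκ Ω hΩdiff x ρ₀ hρ₀pos.le hgne hvar
  -- assembling
  haveI : Nontrivial (EuclideanSpace ℝ (Fin d)) := by
    apply Module.nontrivial_of_finrank_pos (R := ℝ)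
    rw [finrank_euclideanSpace_fin]
    omega
  have hfrk : Module.finrank ℝ (EuclideanSpace ℝ (Fin d)) = d := finrank_euclideanSpace_fin
  set B : ℝ≥0∞ := volume (ball (0 : EuclideanSpace ℝ (Fin d)) 1) with hB
  have hB0 : B ≠ 0 := (measure_ball_pos volume _ one_pos).ne'
  have hBtop : B ≠ ∞ := measure_ball_lt_top.ne
  have hcard2 : (t.card : ℝ≥0∞) * ENNReal.ofReal ((ρ₀ / 2) ^ d) ≤ ENNReal.ofReal ((3 * r) ^ d) := by
    have hv1 : volume (ball (0 : EuclideanSpace ℝ (Fin d)) (ρ₀ / 2))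
        = ENNReal.ofReal ((ρ₀ / 2) ^ d) * B := by
      rw [Measure.addHaar_ball volume 0 (by positivity), hfrk]
    have hv2 : volume (closedBall (0 : EuclideanSpace ℝ (Fin d)) (r + ρ₀))
        ≤ ENNReal.ofReal ((3 * r) ^ d) * B := by
      calc volume (closedBall (0 : EuclideanSpace ℝ (Fin d)) (r + ρ₀))
          ≤ volume (ball (0 : EuclideanSpace ℝ (Fin d)) (3 * r)) :=
            measure_mono (closedBall_subset_ball (by linarith))
        _ = ENNReal.ofReal ((3 * r) ^ d) * B := by
            rw [Measure.addHaar_ball volume 0 (by positivity), hfrk]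
    have h3 := le_trans hcard hv2
    rw [hv1, ← mul_assoc] at h3
    exact (ENNReal.mul_le_mul_iff_left hB0 hBtop).mp h3
  have hofr0 : (0:ℝ) < (ρ₀ / 2) ^ d := by positivity
  have hcard3 : (t.card : ℝ≥0∞) ≤ ENNReal.ofReal ((3 * r) ^ d / (ρ₀ / 2) ^ d) := by
    rw [ENNReal.ofReal_div_of_pos hofr0]
    rw [ENNReal.le_div_iff_mul_le (Or.inl (by simp [ENNReal.ofReal_eq_zero]; nlinarith))
      (Or.inl ENNReal.ofReal_ne_top)]
    exact hcard2
  have hsub2 : piece ⊆ ⋃ x ∈ t, ({y | Ω y = 0} ∩ ball x ρ₀) := by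
    intro z hz
    have h1 := hcover hz
    simp only [mem_iUnion, exists_prop] at h1 ⊢
    obtain ⟨x, hxt, hzb⟩ := h1
    exact ⟨x, hxt, ⟨hz.1.2, hzb⟩⟩
  have hmain : μH[(d : ℝ) - 1] piece
      ≤ ENNReal.ofReal ((3 * r) ^ d / (ρ₀ / 2) ^ d) * ENNReal.ofReal (κ * ρ₀ ^ (d - 1)) := by
    calc μH[(d : ℝ) - 1] piece
        ≤ μH[(d : ℝ) - 1] (⋃ x ∈ t, ({y | Ω y = 0} ∩ ball x ρ₀)) := measure_mono hsub2
      _ ≤ ∑ x ∈ t, μH[(d : ℝ) - 1] ({y | Ω y = 0} ∩ ball x ρ₀) :=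
          measure_biUnion_finset_le t _
      _ ≤ ∑ _x ∈ t, ENNReal.ofReal (κ * ρ₀ ^ (d - 1)) := Finset.sum_le_sum hperball
      _ = (t.card : ℝ≥0∞) * ENNReal.ofReal (κ * ρ₀ ^ (d - 1)) := by
          rw [Finset.sum_const, nsmul_eq_mul]
      _ ≤ ENNReal.ofReal ((3 * r) ^ d / (ρ₀ / 2) ^ d) * ENNReal.ofReal (κ * ρ₀ ^ (d - 1)) :=
          mul_le_mul_left hcard3 _
  refine le_trans hmain ?_
  rw [← ENNReal.ofReal_mul (by positivity)]
  apply ENNReal.ofReal_le_ofReal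
  -- real arithmetic
  have hpow : ρ₀ ^ d = ρ₀ ^ (d - 1) * ρ₀ := by
    rw [← pow_succ]
    congr 1
    omega
  have e1 : (3 * r) ^ d / (ρ₀ / 2) ^ d * (κ * ρ₀ ^ (d - 1)) = 6 ^ d * κ * (r ^ d / ρ₀) := by
    have h63 : (6:ℝ) ^ d = 2 ^ d * 3 ^ d := by rw [← mul_pow]; norm_num
    rw [mul_pow, div_pow, hpow, h63]
    field_simp
  rw [e1]
  have e2 : r ^ d / ρ₀ ≤ r ^ d / (c₃ * r ^ q) := by
    apply div_le_div_of_nonneg_left (by positivity) (by positivity) hρ₀low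
  have e3 : 6 ^ d * κ * (r ^ d / ρ₀) ≤ 6 ^ d * κ * (r ^ d / (c₃ * r ^ q)) := by
    apply mul_le_mul_of_nonneg_left e2 (by positivity)
  refine le_trans e3 ?_
  have e4 : r ^ d / (c₃ * r ^ q) = (1 / c₃) * (r ^ ((d:ℝ)) / r ^ q) := by
    rw [← Real.rpow_natCast r d]
    field_simp
  have e5 : r ^ ((d:ℝ)) / r ^ q = r ^ ((d:ℝ) - q) := (Real.rpow_sub hr _ _).symm
  rw [e4, e5]
  have e6 : (0:ℝ) ≤ r ^ ((d:ℝ) - q) := Real.rpow_nonneg hr.le _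
  calc (6:ℝ) ^ d * κ * (1 / c₃ * r ^ ((d:ℝ) - q)) = 6 ^ d * κ / c₃ * r ^ ((d:ℝ) - q) := by
        ring
    _ ≤ 6 ^ d * κ * 2 / c₃ * r ^ ((d:ℝ) - q) := by
        apply mul_le_mul_of_nonneg_right _ e6
        apply (div_le_div_iff_of_pos_right hc₃pos).mpr
        nlinarith [hκpos, pow_pos (show (0:ℝ) < 6 by norm_num) d]

set_option maxHeartbeats 1000000 in
/-- Let `p < d − q`. Then there is `C > 0` such that for every `δ ∈ (0, 1/2]`,
`∫_{Σ₀ ∩ B_δ} |x|^{-p} dH^{d-1}(x) ≤ C δ^{d−q−p}`. -/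
theorem integral_over_sigma_inside_ball {d : ℕ} (q : ℝ) (hq : 1 ≤ q)
    (D : Set (EuclideanSpace ℝ (Fin d))) (hD : IsOpen D) (hDball : D ⊆ ball 0 1)
    (Ω : EuclideanSpace ℝ (Fin d) → ℝ) (hΩ : ContDiff ℝ 5 Ω)
    (h0D : (0 : EuclideanSpace ℝ (Fin d)) ∈ D) (hΩ0 : Ω 0 = 0)
    (hcrit0 : gradient Ω 0 = 0)
    (hcrit : ∀ x ∈ D, Ω x = 0 → gradient Ω x = 0 → x = 0)
    (c : ℝ) (hc : 0 < c)
    (hgrad : ∀ x ∈ D, c * ‖x‖ ^ q ≤ ‖gradient Ω x‖)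
    (p : ℝ) (hp : p < (d : ℝ) - q) :
    ∃ C > 0, ∀ δ ∈ Set.Ioc (0 : ℝ) (1 / 2),
      ∫⁻ x in (({y ∈ D | Ω y = 0} \ {0}) ∩ ball 0 δ),
          ENNReal.ofReal (‖x‖ ^ (-p)) ∂(μH[(d : ℝ) - 1]) ≤
        ENNReal.ofReal (C * δ ^ ((d : ℝ) - q - p)) := by
  classical
  rcases Nat.eq_zero_or_pos d with hd0 | hd
  · -- trivial case: the space is a single point
    refine ⟨1, one_pos, fun δ hδ => ?_⟩
    have hempty : (({y ∈ D | Ω y = 0} \ {0}) ∩ ball 0 δ)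
        = (∅ : Set (EuclideanSpace ℝ (Fin d))) := by
      apply eq_empty_of_forall_notMem
      rintro x ⟨⟨_, hx0⟩, _⟩
      apply hx0
      subst hd0
      have : x = 0 := by ext i; exact i.elim0
      rw [this]
      exact rfl
    rw [hempty]
    simp
  · -- main case
    obtain ⟨C₁, hC₁, hshell⟩ := shell_bound hd q hq D Ω hΩ c hc hgrad hDball
    set e : ℝ := (d : ℝ) - q - p with he_def
    have he : 0 < e := by rw [he_def]; linarith
    set a : ℝ := (1 / 2 : ℝ) ^ e with ha_def
    have ha0 : 0 < a := Real.rpow_pos_of_pos (by norm_num) e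
    have ha1 : a < 1 := Real.rpow_lt_one (by norm_num) (by norm_num) he
    have h2p : (0:ℝ) < 2 ^ |p| := Real.rpow_pos_of_pos (by norm_num) _
    refine ⟨2 ^ |p| * C₁ * (1 - a)⁻¹, by
      have h1a : (0:ℝ) < 1 - a := by linarith
      positivity, fun δ hδ => ?_⟩
    obtain ⟨hδ0, hδ2⟩ := hδ
    set r : ℕ → ℝ := fun n => δ * (1 / 2 : ℝ) ^ n with hr_def
    have hrpos : ∀ n, 0 < r n := fun n => by
      simp only [hr_def]; positivity
    have hrle : ∀ n, r n ≤ 1 / 2 := fun n => by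
      simp only [hr_def]
      calc δ * (1 / 2 : ℝ) ^ n ≤ δ * 1 := by
            apply mul_le_mul_of_nonneg_left _ hδ0.le
            exact pow_le_one₀ (by norm_num) (by norm_num)
        _ ≤ 1 / 2 := by linarith
    set piece : ℕ → Set (EuclideanSpace ℝ (Fin d)) :=
      fun n => {y ∈ D | Ω y = 0} ∩ {x | r n / 2 ≤ ‖x‖ ∧ ‖x‖ ≤ r n} with hpiece_def
    -- covering by shells
    have hsubset : ({y ∈ D | Ω y = 0} \ {0}) ∩ ball 0 δ ⊆ ⋃ n, piece n := by
      rintro x ⟨⟨hxZ, hx0⟩, hxδ⟩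
      have hx0' : x ≠ 0 := fun h => hx0 (by rw [h]; exact rfl)
      have hT : 0 < ‖x‖ := norm_pos_iff.mpr hx0'
      rw [mem_ball_zero_iff] at hxδ
      have hPex : ∃ k, δ * (1 / 2 : ℝ) ^ (k + 1) ≤ ‖x‖ := by
        obtain ⟨k, hk⟩ := exists_pow_lt_of_lt_one (div_pos hT hδ0)
          (by norm_num : (1 / 2 : ℝ) < 1)
        refine ⟨k, ?_⟩
        have h1 : (1 / 2 : ℝ) ^ (k + 1) ≤ (1 / 2 : ℝ) ^ k :=
          pow_le_pow_of_le_one (by norm_num) (by norm_num) (Nat.le_succ k)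
        have h2 : δ * (1 / 2 : ℝ) ^ k < ‖x‖ := by
          rw [lt_div_iff₀ hδ0] at hk
          rw [mul_comm]
          exact hk
        calc δ * (1 / 2 : ℝ) ^ (k + 1) ≤ δ * (1 / 2 : ℝ) ^ k :=
              mul_le_mul_of_nonneg_left h1 hδ0.le
          _ ≤ ‖x‖ := h2.le
      set n := Nat.find hPex with hn_def
      have hlow : δ * (1 / 2 : ℝ) ^ (n + 1) ≤ ‖x‖ := Nat.find_spec hPex
      have hhigh : ‖x‖ ≤ δ * (1 / 2 : ℝ) ^ n := by
        rcases Nat.eq_zero_or_pos n with h0 | hpos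
        · rw [h0]
          simpa using hxδ.le
        · have hm := Nat.find_min hPex (Nat.sub_lt hpos one_pos)
          push_neg at hm
          have : n - 1 + 1 = n := Nat.succ_pred_eq_of_pos hpos
          rw [this] at hm
          exact hm.le
      refine mem_iUnion.mpr ⟨n, ⟨hxZ, ?_, hhigh⟩⟩
      have : r n / 2 = δ * (1 / 2 : ℝ) ^ (n + 1) := by
        simp only [hr_def, pow_succ]
        ring
      rw [this]
      exact hlow
    -- the integrand is bounded on each shell
    have hweight : ∀ n, ∀ x ∈ piece n,
        ENNReal.ofReal (‖x‖ ^ (-p)) ≤ ENNReal.ofReal (2 ^ |p| * (r n) ^ (-p)) := by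
      intro n x hx
      apply ENNReal.ofReal_le_ofReal
      obtain ⟨-, hx1, hx2⟩ := hx
      have h2abs : (1:ℝ) ≤ 2 ^ |p| := Real.one_le_rpow (by norm_num) (abs_nonneg p)
      rcases le_or_gt 0 (-p) with hsgn | hsgn
      · calc ‖x‖ ^ (-p) ≤ (r n) ^ (-p) := Real.rpow_le_rpow (norm_nonneg x) hx2 hsgn
          _ ≤ 2 ^ |p| * (r n) ^ (-p) := by
              nlinarith [Real.rpow_nonneg (hrpos n).le (-p)]
      · have hppos : 0 < p := by linarith
        have hrn2 : 0 < r n / 2 := by linarith [hrpos n]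
        have step1 : ‖x‖ ^ (-p) ≤ (r n / 2) ^ (-p) := by
          rw [Real.rpow_neg (norm_nonneg x), Real.rpow_neg hrn2.le]
          apply inv_anti₀ (Real.rpow_pos_of_pos hrn2 p)
          exact Real.rpow_le_rpow hrn2.le hx1 hppos.le
        have step2 : (r n / 2) ^ (-p) = (r n) ^ (-p) * 2 ^ p := by
          rw [Real.div_rpow (hrpos n).le (by norm_num : (0:ℝ) ≤ 2)]
          rw [div_eq_mul_inv, ← Real.rpow_neg (by norm_num : (0:ℝ) ≤ 2)]
          rw [neg_neg]
        have step3 : (2:ℝ) ^ p ≤ 2 ^ |p| :=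
          Real.rpow_le_rpow_of_exponent_le one_le_two (le_abs_self p)
        calc ‖x‖ ^ (-p) ≤ (r n) ^ (-p) * 2 ^ p := by rw [← step2]; exact step1
          _ ≤ 2 ^ |p| * (r n) ^ (-p) := by
              rw [mul_comm]
              exact mul_le_mul_of_nonneg_right step3 (Real.rpow_nonneg (hrpos n).le _)
    -- per-shell integral estimate
    have hpershell : ∀ n, ∫⁻ x in piece n, ENNReal.ofReal (‖x‖ ^ (-p)) ∂(μH[(d : ℝ) - 1])
        ≤ ENNReal.ofReal (2 ^ |p| * C₁ * δ ^ e) * (ENNReal.ofReal a) ^ n := by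
      intro n
      have step1 : ∫⁻ x in piece n, ENNReal.ofReal (‖x‖ ^ (-p)) ∂(μH[(d : ℝ) - 1])
          ≤ ENNReal.ofReal (2 ^ |p| * (r n) ^ (-p)) * μH[(d : ℝ) - 1] (piece n) := by
        calc ∫⁻ x in piece n, ENNReal.ofReal (‖x‖ ^ (-p)) ∂(μH[(d : ℝ) - 1])
            ≤ ∫⁻ _x in piece n, ENNReal.ofReal (2 ^ |p| * (r n) ^ (-p)) ∂(μH[(d : ℝ) - 1]) :=
              setLIntegral_mono measurable_const (hweight n)
          _ = ENNReal.ofReal (2 ^ |p| * (r n) ^ (-p)) * μH[(d : ℝ) - 1] (piece n) :=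
              setLIntegral_const _ _
      have step2 : μH[(d : ℝ) - 1] (piece n) ≤ ENNReal.ofReal (C₁ * (r n) ^ ((d : ℝ) - q)) :=
        hshell (r n) (hrpos n) (hrle n)
      refine le_trans step1 (le_trans (mul_le_mul_right step2 _) ?_)
      rw [← ENNReal.ofReal_mul (by positivity)]
      -- now pure real computation
      have hreq : 2 ^ |p| * (r n) ^ (-p) * (C₁ * (r n) ^ ((d : ℝ) - q))
          = (2 ^ |p| * C₁ * δ ^ e) * a ^ n := by
        have h1 : (r n) ^ (-p) * (r n) ^ ((d : ℝ) - q) = (r n) ^ e := by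
          rw [← Real.rpow_add (hrpos n)]
          congr 1
          rw [he_def]; ring
        have h2 : (r n) ^ e = δ ^ e * a ^ n := by
          simp only [hr_def]
          rw [Real.mul_rpow hδ0.le (by positivity)]
          congr 1
          rw [← Real.rpow_natCast ((1/2 : ℝ)) n, ← Real.rpow_mul (by norm_num), mul_comm,
            Real.rpow_mul (by norm_num), Real.rpow_natCast]
        calc 2 ^ |p| * (r n) ^ (-p) * (C₁ * (r n) ^ ((d : ℝ) - q))
            = 2 ^ |p| * C₁ * ((r n) ^ (-p) * (r n) ^ ((d : ℝ) - q)) := by ring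
          _ = 2 ^ |p| * C₁ * (δ ^ e * a ^ n) := by rw [h1, h2]
          _ = (2 ^ |p| * C₁ * δ ^ e) * a ^ n := by ring
      rw [hreq, ENNReal.ofReal_mul (by positivity), ENNReal.ofReal_pow ha0.le]
    -- sum up
    calc ∫⁻ x in (({y ∈ D | Ω y = 0} \ {0}) ∩ ball 0 δ),
          ENNReal.ofReal (‖x‖ ^ (-p)) ∂(μH[(d : ℝ) - 1])
        ≤ ∫⁻ x in (⋃ n, piece n), ENNReal.ofReal (‖x‖ ^ (-p)) ∂(μH[(d : ℝ) - 1]) :=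
          lintegral_mono' (Measure.restrict_mono hsubset le_rfl) le_rfl
      _ ≤ ∑' n, ∫⁻ x in piece n, ENNReal.ofReal (‖x‖ ^ (-p)) ∂(μH[(d : ℝ) - 1]) :=
          lintegral_iUnion_le _ _
      _ ≤ ∑' n, ENNReal.ofReal (2 ^ |p| * C₁ * δ ^ e) * (ENNReal.ofReal a) ^ n :=
          ENNReal.tsum_le_tsum hpershell
      _ = ENNReal.ofReal (2 ^ |p| * C₁ * δ ^ e) * ∑' n, (ENNReal.ofReal a) ^ n :=
          ENNReal.tsum_mul_left
      _ ≤ ENNReal.ofReal (2 ^ |p| * C₁ * (1 - a)⁻¹ * δ ^ ((d : ℝ) - q - p)) := by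
          rw [ENNReal.tsum_geometric]
          have h1 : (1 : ℝ≥0∞) - ENNReal.ofReal a = ENNReal.ofReal (1 - a) := by
            rw [ENNReal.ofReal_sub 1 ha0.le, ENNReal.ofReal_one]
          rw [h1, ← ENNReal.ofReal_inv_of_pos (by linarith : (0:ℝ) < 1 - a)]
          rw [← ENNReal.ofReal_mul (by positivity)]
          apply ENNReal.ofReal_le_ofReal
          rw [← he_def]
          have hnn : (0:ℝ) ≤ (1 - a)⁻¹ := by
            apply inv_nonneg.mpr; linarith
          nlinarith [Real.rpow_nonneg hδ0.le e, h2p, hC₁, hnn,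
            mul_pos (mul_pos h2p hC₁) (Real.rpow_pos_of_pos hδ0 e)]
      _ = ENNReal.ofReal (2 ^ |p| * C₁ * (1 - a)⁻¹ * δ ^ ((d : ℝ) - q - p)) := rfl
end

section
/- Let $s > 0$ be so small that the closed ball $B_{2s}$ of radius $2s$ centered at the origin is contained in $D$. Then there exists a constant $C > 0$ such that $|\Omega(x)| \geq C\, |x|^{2q}$ uniformly for all $x \in B_s \setminus U_\Theta(\Sigma_0)$, where $U_\Theta(\Sigma_0) := \{x_\xi + \theta\,\nabla\Omega(x_\xi) \in D : x_\xi \in \Sigma_0,\; |\theta| < \Theta\}$. -/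
open MeasureTheory Metric Real Set

open Filter Topology in
set_option maxHeartbeats 1000000 in
lemma key_lemma {d : ℕ} (Ω : EuclideanSpace ℝ (Fin d) → ℝ) (hΩd : Differentiable ℝ Ω)
    (x : EuclideanSpace ℝ (Fin d)) (r g : ℝ) (hr : 0 < r) (hg : 0 < g)
    (hne : ∀ y ∈ closedBall x r, Ω y ≠ 0)
    (hgr : ∀ y ∈ closedBall x r, g ≤ ‖gradient Ω y‖) :
    g * r ≤ |Ω x| := by
  have key : ∀ g' : ℝ, 0 < g' → g' < g → g' * r ≤ |Ω x| := by
    intro g' hg'0 hg'g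
    have hGcont : ContinuousOn (fun y => |Ω y| + g' * dist y x) (closedBall x r) :=
      ((hΩd.continuous.abs).add
        (continuous_const.mul (continuous_id.dist continuous_const))).continuousOn
    obtain ⟨z, hz, hzmin⟩ := (isCompact_closedBall x r).exists_isMinOn
      ⟨x, mem_closedBall_self hr.le⟩ hGcont
    rcases lt_or_eq_of_le (mem_closedBall.mp hz) with hzint | hzbd
    · -- interior minimum: contradiction via directional derivative
      exfalso
      have hΩz : Ω z ≠ 0 := hne z hz
      set σ : ℝ := if 0 < Ω z then 1 else -1 with hσ
      have hσpos : 0 < σ * Ω z := by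
        rcases lt_trichotomy 0 (Ω z) with h | h | h
        · simp [hσ, h]
        · exact absurd h.symm hΩz
        · simp only [hσ, if_neg (not_lt.mpr h.le)]; nlinarith
      have hσΩ : σ * Ω z = |Ω z| := by
        rcases lt_trichotomy 0 (Ω z) with h | h | h
        · simp [hσ, h, abs_of_pos h]
        · exact absurd h.symm hΩz
        · simp [hσ, not_lt.mpr h.le, abs_of_neg h]
      have hσsq : σ * σ = 1 := by
        rcases lt_or_ge 0 (Ω z) with h | h
        · simp [hσ, h]
        · simp [hσ, not_lt.mpr h]
      set w := gradient Ω z with hw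
      have hwg : g ≤ ‖w‖ := hgr z hz
      have hwpos : 0 < ‖w‖ := lt_of_lt_of_le hg hwg
      set v : EuclideanSpace ℝ (Fin d) := (-(σ / ‖w‖)) • w with hv
      have hσabs : |σ| = 1 := by
        rcases lt_or_ge 0 (Ω z) with h | h
        · simp [hσ, h]
        · simp [hσ, not_lt.mpr h]
      have hvnorm : ‖v‖ = 1 := by
        rw [hv, norm_smul, Real.norm_eq_abs, abs_neg, abs_div, hσabs, abs_norm]
        field_simp
      -- the derivative of t ↦ Ω (z + t • v) at 0
      have hline : HasDerivAt (fun t : ℝ => z + t • v) v 0 := by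
        simpa using ((hasDerivAt_id (0:ℝ)).smul_const v).const_add z
      have hfd : HasFDerivAt Ω (fderiv ℝ Ω z) (z + (0:ℝ) • v) := by
        simpa using (hΩd z).hasFDerivAt
      have hcomp : HasDerivAt (fun t : ℝ => Ω (z + t • v)) (fderiv ℝ Ω z v) 0 :=
        hfd.comp_hasDerivAt 0 hline
      have hfdv : fderiv ℝ Ω z v = -(σ * ‖w‖) := by
        have h1 : (inner ℝ w v : ℝ) = fderiv ℝ Ω z v := by
          simp only [hw, gradient]
          exact InnerProductSpace.toDual_symm_apply
        rw [← h1, hv, real_inner_smul_right, real_inner_self_eq_norm_sq]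
        field_simp
      have hφ : HasDerivAt (fun t : ℝ => σ * Ω (z + t • v)) (σ * (-(σ * ‖w‖))) 0 := by
        rw [← hfdv]; exact hcomp.const_mul σ
      have hderval : σ * (-(σ * ‖w‖)) = -‖w‖ := by nlinarith [hσsq]
      rw [hderval] at hφ
      -- positivity of σ * Ω near z on the line
      have hcont : Continuous fun t : ℝ => σ * Ω (z + t • v) :=
        continuous_const.mul (hΩd.continuous.comp
          (continuous_const.add (continuous_id.smul continuous_const)))
      have hopen : IsOpen {t : ℝ | 0 < σ * Ω (z + t • v)} :=
        isOpen_lt continuous_const hcont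
      have h0mem : (0:ℝ) ∈ {t : ℝ | 0 < σ * Ω (z + t • v)} := by
        simpa using hσpos
      obtain ⟨δ₂, hδ₂pos, hδ₂⟩ := Metric.isOpen_iff.mp hopen 0 h0mem
      set δ : ℝ := min (r - dist z x) (δ₂ / 2) with hδ
      have hδpos : 0 < δ := lt_min (by linarith) (by linarith)
      -- one-sided minimality gives slope ≥ -g'
      have hslope : ∀ t ∈ Ioc (0:ℝ) δ, -g' ≤ slope (fun t : ℝ => σ * Ω (z + t • v)) 0 t := by
        intro t ht
        have ht0 : 0 < t := ht.1
        have htδ : t ≤ δ := ht.2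
        have hmem : z + t • v ∈ closedBall x r := by
          have : dist (z + t • v) x ≤ dist (z + t • v) z + dist z x := dist_triangle _ _ _
          have h2 : dist (z + t • v) z = t := by
            simp [dist_eq_norm, norm_smul, abs_of_pos ht0, hvnorm]
          rw [mem_closedBall]
          have : dist (z + t • v) x ≤ t + dist z x := by rw [h2] at this; linarith
          have htr : t ≤ r - dist z x := le_trans htδ (min_le_left _ _)
          linarith
        have hpos : 0 < σ * Ω (z + t • v) := by
          refine hδ₂ ?_
          rw [mem_ball, dist_zero_right, Real.norm_eq_abs, abs_of_pos ht0]
          have : t ≤ δ₂ / 2 := le_trans htδ (min_le_right _ _)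
          linarith
        have hG : |Ω z| + g' * dist z x ≤ |Ω (z + t • v)| + g' * dist (z + t • v) x :=
          hzmin hmem
        have habs : |Ω (z + t • v)| = σ * Ω (z + t • v) := by
          rcases lt_or_ge 0 (Ω z) with h | h
          · rw [hσ, if_pos h] at hpos ⊢; rw [abs_of_pos (by linarith [hpos]), one_mul]
          · rw [hσ, if_neg (not_lt.mpr h)] at hpos ⊢
            rw [abs_of_neg (by nlinarith [hpos])]; ring
        have hdt : dist (z + t • v) x ≤ dist z x + t := by
          have h2 : dist (z + t • v) z = t := by
            simp [dist_eq_norm, norm_smul, abs_of_pos ht0, hvnorm]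
          calc dist (z + t • v) x ≤ dist (z + t • v) z + dist z x := dist_triangle _ _ _
            _ = dist z x + t := by rw [h2]; ring
        have hineq : σ * Ω z - g' * t ≤ σ * Ω (z + t • v) := by
          rw [← habs, hσΩ]
          nlinarith [hG, hdt]
        have hf0 : σ * Ω (z + (0:ℝ) • v) = σ * Ω z := by norm_num
        rw [slope_def_field, sub_zero, le_div_iff₀ ht0, hf0]
        linarith [hineq]
      have htend : Tendsto (slope (fun t : ℝ => σ * Ω (z + t • v)) 0) (𝓝[>] (0:ℝ))
          (𝓝 (-‖w‖)) :=
        (hasDerivAt_iff_tendsto_slope.mp hφ).mono_left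
          (nhdsWithin_mono 0 fun t ht => ne_of_gt ht)
      have hev : ∀ᶠ t in 𝓝[>] (0:ℝ),
          -g' ≤ slope (fun t : ℝ => σ * Ω (z + t • v)) 0 t :=
        Filter.eventually_of_mem (Ioc_mem_nhdsGT_of_mem ⟨le_refl 0, hδpos⟩) hslope
      have hge : -g' ≤ -‖w‖ := ge_of_tendsto htend hev
      linarith
    · -- boundary case
      have h1 : |Ω z| + g' * dist z x ≤ |Ω x| + g' * dist x x :=
        hzmin (mem_closedBall_self hr.le)
      rw [dist_self, mul_zero, add_zero] at h1
      rw [← hzbd]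
      linarith [abs_nonneg (Ω z)]
  by_contra hcon
  push_neg at hcon
  have hx0 : 0 ≤ |Ω x| := abs_nonneg _
  have h1 : |Ω x| / r < g := by rw [div_lt_iff₀ hr]; linarith
  have h2 : 0 ≤ |Ω x| / r := div_nonneg hx0 hr.le
  have := key ((|Ω x| / r + g) / 2) (by linarith) (by linarith)
  have h3 : |Ω x| / r * r = |Ω x| := div_mul_cancel₀ _ (ne_of_gt hr)
  nlinarith [this, h3]

set_option maxHeartbeats 1000000 in

/-- Let `s > 0` be so small that the closed ball `B_{2s}` is contained in `D`. Then there
is `C > 0` such that `|Ω(x)| ≥ C |x|^{2q}` uniformly for `x ∈ B_s \ U_Θ(Σ₀)`, where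
`U_Θ(Σ₀) = {x_ξ + θ ∇Ω(x_ξ) ∈ D : x_ξ ∈ Σ₀, |θ| < Θ}`. -/
theorem omega_lower_bound_outside_tubular {d : ℕ} (q : ℝ) (hq : 1 ≤ q)
    (D : Set (EuclideanSpace ℝ (Fin d))) (hD : IsOpen D) (hDball : D ⊆ ball 0 1)
    (Ω : EuclideanSpace ℝ (Fin d) → ℝ) (hΩ : ContDiff ℝ 5 Ω)
    (h0D : (0 : EuclideanSpace ℝ (Fin d)) ∈ D) (hΩ0 : Ω 0 = 0)
    (hcrit0 : gradient Ω 0 = 0)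
    (hcrit : ∀ x ∈ D, Ω x = 0 → gradient Ω x = 0 → x = 0)
    (c : ℝ) (hc : 0 < c)
    (hgrad : ∀ x ∈ D, c * ‖x‖ ^ q ≤ ‖gradient Ω x‖)
    (hdist : ∀ x ∈ D,
      EMetric.infEdist x {y | Ω y = 0} <
        EMetric.infEdist x ({y | Ω y = 0} ∩ frontier D))
    (Θ : ℝ) (hΘ : Θ ∈ Set.Ioc (0 : ℝ) 1)
    (hinj : ∀ x₁ ∈ ({y ∈ D | Ω y = 0} \ {0}), ∀ x₂ ∈ ({y ∈ D | Ω y = 0} \ {0}),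
      ∀ θ₁ θ₂ : ℝ, |θ₁| ≤ Θ → |θ₂| ≤ Θ →
        x₁ + θ₁ • gradient Ω x₁ = x₂ + θ₂ • gradient Ω x₂ → x₁ = x₂ ∧ θ₁ = θ₂)
    (s : ℝ) (hs : 0 < s) (h2s : closedBall 0 (2 * s) ⊆ D) :
    ∃ C > 0, ∀ x ∈ ball 0 s \
        {z ∈ D | ∃ ξ ∈ ({y ∈ D | Ω y = 0} \ {0}), ∃ θ : ℝ, |θ| < Θ ∧
          z = ξ + θ • gradient Ω ξ},
      C * ‖x‖ ^ (2 * q) ≤ |Ω x| := by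
  obtain ⟨hΘ0, hΘ1⟩ := hΘ
  have hq0 : (0:ℝ) < q := lt_of_lt_of_le one_pos hq
  have hΩdiff : Differentiable ℝ Ω := hΩ.differentiable (by norm_num)
  have hSclosed : IsClosed {y : EuclideanSpace ℝ (Fin d) | Ω y = 0} :=
    isClosed_eq hΩdiff.continuous continuous_const
  have h2q : (0:ℝ) < (2:ℝ)⁻¹ ^ q := Real.rpow_pos_of_pos (by norm_num) q
  set K : ℝ := min (Θ * c * (2:ℝ)⁻¹ ^ q / 2) (1/4) with hKdef
  have hKpos : 0 < K := lt_min (by positivity) (by norm_num)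
  have hK4 : K ≤ 1/4 := min_le_right _ _
  refine ⟨c * (2:ℝ)⁻¹ ^ q * K, by positivity, ?_⟩
  rintro x ⟨hxball, hxU⟩
  rcases eq_or_ne x 0 with rfl | hx0
  · rw [norm_zero, Real.zero_rpow (by positivity : 2 * q ≠ 0), mul_zero]
    exact abs_nonneg _
  have ha0 : 0 < ‖x‖ := norm_pos_iff.mpr hx0
  have hxs : ‖x‖ < s := by rw [mem_ball, dist_zero_right] at hxball; exact hxball
  have hxD : x ∈ D := h2s (by rw [mem_closedBall, dist_zero_right]; linarith)
  have ha1 : ‖x‖ < 1 := by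
    have := hDball hxD; rw [mem_ball, dist_zero_right] at this; exact this
  have hΩx : Ω x ≠ 0 := by
    intro hx
    exact hxU ⟨hxD, x, ⟨⟨hxD, hx⟩, by simpa using hx0⟩, 0, by simpa using hΘ0, by simp⟩
  have hxnot : x ∉ {y : EuclideanSpace ℝ (Fin d) | Ω y = 0} := hΩx
  set ρ : ℝ := Metric.infDist x {y : EuclideanSpace ℝ (Fin d) | Ω y = 0} with hρdef
  have hρpos : 0 < ρ := (hSclosed.notMem_iff_infDist_pos ⟨0, hΩ0⟩).mp hxnot
  have hρa : ρ ≤ ‖x‖ := by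
    have h := Metric.infDist_le_dist_of_mem (x := x)
      (show (0:EuclideanSpace ℝ (Fin d)) ∈ {y : EuclideanSpace ℝ (Fin d) | Ω y = 0} from hΩ0)
    rwa [dist_zero_right] at h
  obtain ⟨ξ, hxiS, hξd⟩ := hSclosed.exists_infDist_eq_dist ⟨0, hΩ0⟩ x
  set r : ℝ := min (ρ / 2) (‖x‖ / 4) with hrdef
  have hr0 : 0 < r := lt_min (by linarith) (by linarith)
  have hrρ : r ≤ ρ / 2 := min_le_left _ _
  have hra : r ≤ ‖x‖ / 4 := min_le_right _ _
  have haqpos : 0 < ‖x‖ ^ q := Real.rpow_pos_of_pos ha0 q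
  -- key lemma application
  have hkey : c * (‖x‖ / 2) ^ q * r ≤ |Ω x| := by
    refine key_lemma Ω hΩdiff x r _ hr0
      (mul_pos hc (Real.rpow_pos_of_pos (by linarith) q)) ?_ ?_
    · intro y hy hΩy
      have h1 : ρ ≤ dist x y := Metric.infDist_le_dist_of_mem hΩy
      have h2 : dist x y ≤ r := by rw [dist_comm]; exact mem_closedBall.mp hy
      linarith
    · intro y hy
      have hyx : dist y x ≤ r := mem_closedBall.mp hy
      have hd1 : ‖x‖ - ‖y‖ ≤ dist y x := by
        have := norm_sub_norm_le x y
        rw [← dist_eq_norm, dist_comm] at this; linarith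
      have hd2 : ‖y‖ - ‖x‖ ≤ dist y x := by
        have := norm_sub_norm_le y x
        rw [← dist_eq_norm] at this; linarith
      have hylb : ‖x‖ / 2 ≤ ‖y‖ := by linarith
      have hyD : y ∈ D := h2s (by rw [mem_closedBall, dist_zero_right]; linarith)
      have hmono : (‖x‖ / 2) ^ q ≤ ‖y‖ ^ q :=
        Real.rpow_le_rpow (by positivity) hylb hq0.le
      calc c * (‖x‖ / 2) ^ q ≤ c * ‖y‖ ^ q := by nlinarith
        _ ≤ ‖gradient Ω y‖ := hgrad y hyD
  -- lower bound on r
  have haq : ‖x‖ ^ q ≤ ‖x‖ := by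
    calc ‖x‖ ^ q ≤ ‖x‖ ^ (1:ℝ) := Real.rpow_le_rpow_of_exponent_ge ha0 ha1.le hq
      _ = ‖x‖ := Real.rpow_one _
  have h4 : K * ‖x‖ ^ q ≤ ‖x‖ / 4 := by nlinarith
  have hrK : K * ‖x‖ ^ q ≤ r := by
    rcases le_or_gt (‖x‖ / 2) ρ with hcase | hcase
    · exact le_min (by linarith) h4
    -- Lagrange multiplier case: ρ < ‖x‖/2
    refine le_min ?_ h4
    have hξx : dist x ξ = ρ := hξd.symm
    have hξlb : ‖x‖ / 2 ≤ ‖ξ‖ := by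
      have := norm_sub_norm_le x ξ
      rw [← dist_eq_norm, hξx] at this; linarith
    have hξ0 : ξ ≠ 0 := by
      intro h; rw [h, norm_zero] at hξlb; linarith
    have hξub : ‖ξ‖ ≤ 2 * s := by
      have := norm_sub_norm_le ξ x
      rw [← dist_eq_norm, dist_comm, hξx] at this; linarith
    have hξD : ξ ∈ D := h2s (by rw [mem_closedBall, dist_zero_right]; exact hξub)
    have hgξ : c * ‖ξ‖ ^ q ≤ ‖gradient Ω ξ‖ := hgrad ξ hξD
    have hξqpos : (0:ℝ) < ‖ξ‖ ^ q := Real.rpow_pos_of_pos (by linarith) q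
    have hgξpos : 0 < ‖gradient Ω ξ‖ := lt_of_lt_of_le (by positivity) hgξ
    -- Lagrange multipliers: the nearest point gives x - ξ parallel to gradient
    have hmin : IsLocalExtrOn (fun y : EuclideanSpace ℝ (Fin d) =>
        (inner ℝ (y - x) (y - x) : ℝ)) {y | Ω y = Ω ξ} ξ := by
      left
      refine Filter.eventually_of_mem self_mem_nhdsWithin fun y hy => ?_
      have hyS : y ∈ {y : EuclideanSpace ℝ (Fin d) | Ω y = 0} := by
        rw [mem_setOf_eq] at hy ⊢; rw [hy]; exact hxiS
      have h1 : dist x ξ ≤ dist x y := by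
        rw [hξx]; exact Metric.infDist_le_dist_of_mem hyS
      have h2 : ‖ξ - x‖ ≤ ‖y - x‖ := by
        rw [dist_comm x ξ, dist_comm x y, dist_eq_norm, dist_eq_norm] at h1; exact h1
      simp only [real_inner_self_eq_norm_sq]
      nlinarith [norm_nonneg (ξ - x), norm_nonneg (y - x)]
    have hΩ' : HasStrictFDerivAt Ω (fderiv ℝ Ω ξ) ξ :=
      (hΩ.contDiffAt).hasStrictFDerivAt (by norm_num)
    have hsub : HasStrictFDerivAt (fun y : EuclideanSpace ℝ (Fin d) => y - x)
        (ContinuousLinearMap.id ℝ _) ξ := (hasStrictFDerivAt_id ξ).sub_const x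
    have hφ' := hsub.inner ℝ hsub
    obtain ⟨Λ, Λ₀, hΛne, hΛ⟩ := hmin.exists_multipliers_of_hasStrictFDerivAt_1d hΩ' hφ'
    have hvec : ∀ v : EuclideanSpace ℝ (Fin d),
        Λ * (inner ℝ (gradient Ω ξ) v : ℝ) + Λ₀ * (2 * (inner ℝ (ξ - x) v : ℝ)) = 0 := by
      intro v
      have h0 := ContinuousLinearMap.ext_iff.mp hΛ v
      simp only [ContinuousLinearMap.add_apply, ContinuousLinearMap.coe_smul',
        Pi.smul_apply, ContinuousLinearMap.comp_apply, ContinuousLinearMap.prod_apply,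
        ContinuousLinearMap.coe_id', id_eq, fderivInnerCLM_apply,
        ContinuousLinearMap.zero_apply, smul_eq_mul] at h0
      have hgv : (inner ℝ (gradient Ω ξ) v : ℝ) = fderiv ℝ Ω ξ v := by
        simp only [gradient]; exact InnerProductSpace.toDual_symm_apply
      rw [hgv]
      linear_combination h0 + Λ₀ * real_inner_comm v (ξ - x)
    have hvec2 : Λ • gradient Ω ξ + (2 * Λ₀) • (ξ - x) = 0 := by
      refine ext_inner_right ℝ fun v => ?_
      rw [inner_add_left, real_inner_smul_left, real_inner_smul_left, inner_zero_left]
      linear_combination hvec v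
    rcases eq_or_ne Λ₀ 0 with hΛ₀ | hΛ₀
    · exfalso
      have hΛ0 : Λ ≠ 0 := by
        intro h; exact hΛne (by simp [h, hΛ₀, Prod.ext_iff])
      rw [hΛ₀] at hvec2
      simp only [mul_zero, zero_smul, add_zero] at hvec2
      rcases smul_eq_zero.mp hvec2 with h | h
      · exact hΛ0 h
      · rw [h, norm_zero] at hgξpos; exact lt_irrefl _ hgξpos
    · have h2Λ : (2 * Λ₀) ≠ 0 := mul_ne_zero two_ne_zero hΛ₀
      have h3 : (2 * Λ₀) • (ξ - x) = (-Λ) • gradient Ω ξ := by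
        rw [neg_smul]
        exact eq_neg_of_add_eq_zero_right hvec2
      set θ : ℝ := (2 * Λ₀)⁻¹ * Λ with hθdef
      have hξx2 : ξ - x = (-θ) • gradient Ω ξ := by
        calc ξ - x = (2 * Λ₀)⁻¹ • ((2 * Λ₀) • (ξ - x)) := (inv_smul_smul₀ h2Λ _).symm
          _ = (2 * Λ₀)⁻¹ • ((-Λ) • gradient Ω ξ) := by rw [h3]
          _ = (-θ) • gradient Ω ξ := by rw [smul_smul, hθdef]; congr 1; ring
      have hxeq : x = ξ + θ • gradient Ω ξ := by
        have h5 : x = ξ - (ξ - x) := by abel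
        rw [h5, hξx2, neg_smul, sub_neg_eq_add]
      have hΘθ : Θ ≤ |θ| := by
        by_contra hcon2
        push_neg at hcon2
        exact hxU ⟨hxD, ξ, ⟨⟨hξD, hxiS⟩, by simpa using hξ0⟩, θ, hcon2, hxeq⟩
      have hρlb : Θ * (c * ‖ξ‖ ^ q) ≤ ρ := by
        have h5 : ρ = ‖x - ξ‖ := by rw [← hξx, dist_eq_norm]
        have h6 : x - ξ = θ • gradient Ω ξ := by rw [hxeq]; abel
        rw [h5, h6, norm_smul, Real.norm_eq_abs]
        exact mul_le_mul hΘθ hgξ (by positivity) (abs_nonneg θ)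
      have h7 : (‖x‖ / 2) ^ q ≤ ‖ξ‖ ^ q := Real.rpow_le_rpow (by positivity) hξlb hq0.le
      have h8 : (‖x‖ / 2) ^ q = ‖x‖ ^ q * (2:ℝ)⁻¹ ^ q := by
        rw [div_eq_mul_inv, Real.mul_rpow ha0.le (by norm_num)]
      have hK1 : K ≤ Θ * c * (2:ℝ)⁻¹ ^ q / 2 := min_le_left _ _
      have h9 : Θ * c * (‖x‖ ^ q * (2:ℝ)⁻¹ ^ q) ≤ Θ * c * ‖ξ‖ ^ q := by
        apply mul_le_mul_of_nonneg_left _ (by positivity)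
        rw [← h8]; exact h7
      have h10 : K * ‖x‖ ^ q ≤ (Θ * c * (2:ℝ)⁻¹ ^ q / 2) * ‖x‖ ^ q :=
        mul_le_mul_of_nonneg_right hK1 haqpos.le
      nlinarith [h9, h10, hρlb]
  -- conclusion
  have h1 : (‖x‖ / 2) ^ q = ‖x‖ ^ q * (2:ℝ)⁻¹ ^ q := by
    rw [div_eq_mul_inv, Real.mul_rpow ha0.le (by norm_num)]
  have h2 : ‖x‖ ^ (2 * q) = ‖x‖ ^ q * ‖x‖ ^ q := by
    rw [two_mul, Real.rpow_add ha0]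
  have hfin : c * (2:ℝ)⁻¹ ^ q * K * ‖x‖ ^ (2 * q) ≤ c * (‖x‖ / 2) ^ q * r := by
    rw [h1, h2]
    have hmm : c * (‖x‖ ^ q * (2:ℝ)⁻¹ ^ q) * (K * ‖x‖ ^ q) ≤
        c * (‖x‖ ^ q * (2:ℝ)⁻¹ ^ q) * r :=
      mul_le_mul_of_nonneg_left hrK (by positivity)
    nlinarith [hmm]
  linarith [hkey, hfin]
end

section
/- Let $a < 0 < b$ and let $\Phi : [a,b] \to \mathbb{R}$ be $C^2$-smooth. Then there exists a constant $C$, depending only on $a$, $b$, and the $C^2$ norm of $\Phi$ on $[a,b]$ (in particular independent of $\varepsilon$ and $\rho$), such that for all $\varepsilon \in (0,1]$ and all $\rho \in \mathbb{R}$, $\Big| \int_a^b \frac{(\Phi(u) - \Phi(0))\, \cos(\rho\, \varepsilon^{-1} u)}{u^2 + \varepsilon^2}\, du \Big| \leq C$. -/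
open Real intervalIntegral

lemma odd_integral_zero (A θ ε m : ℝ) :
    (∫ u in (-m)..m, A * u * Real.cos (θ * u) / (u ^ 2 + ε ^ 2)) = 0 := by
  have h := intervalIntegral.integral_comp_neg (a := -m) (b := m)
    (fun u => A * u * Real.cos (θ * u) / (u ^ 2 + ε ^ 2))
  simp only [neg_neg] at h
  have h2 : (∫ u in (-m)..m, A * (-u) * Real.cos (θ * -u) / ((-u) ^ 2 + ε ^ 2))
      = -∫ u in (-m)..m, A * u * Real.cos (θ * u) / (u ^ 2 + ε ^ 2) := by
    rw [← intervalIntegral.integral_neg]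
    congr 1; funext u
    rw [show θ * -u = -(θ * u) by ring, Real.cos_neg]
    ring
  rw [h2] at h
  linarith

lemma linear_cont (A θ ε : ℝ) (hε : 0 < ε) :
    Continuous (fun u : ℝ => A * u * Real.cos (θ * u) / (u ^ 2 + ε ^ 2)) := by
  apply Continuous.div
  · exact (continuous_const.mul continuous_id).mul
      (Real.continuous_cos.comp (continuous_const.mul continuous_id))
  · exact (continuous_pow 2).add continuous_const
  · intro u; positivity

lemma linear_piece_bound (A θ ε p q m : ℝ) (hε : 0 < ε) (hm : 0 < m)
    (h : ∀ x ∈ Set.uIoc p q, m ≤ |x|) :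
    |∫ u in p..q, A * u * Real.cos (θ * u) / (u ^ 2 + ε ^ 2)| ≤ |A| / m * |q - p| := by
  rw [← Real.norm_eq_abs (∫ u in p..q, _)]
  apply intervalIntegral.norm_integral_le_of_norm_le_const
  intro x hx
  have hxm := h x hx
  have hx0 : 0 < |x| := lt_of_lt_of_le hm hxm
  have hden : x ^ 2 ≤ x ^ 2 + ε ^ 2 := le_add_of_nonneg_right (by positivity)
  have hxne : x ≠ 0 := by intro h0; rw [h0, abs_zero] at hx0; exact lt_irrefl 0 hx0
  have hx2 : 0 < x ^ 2 := by positivity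
  calc ‖A * x * Real.cos (θ * x) / (x ^ 2 + ε ^ 2)‖
      = |A| * |x| * |Real.cos (θ * x)| / (x ^ 2 + ε ^ 2) := by
        rw [Real.norm_eq_abs, abs_div, abs_mul, abs_mul, abs_of_pos (by positivity : (0:ℝ) < x ^ 2 + ε ^ 2)]
    _ ≤ |A| * |x| * 1 / (x ^ 2) := by
        apply div_le_div₀ (by positivity) _ hx2 hden
        exact mul_le_mul_of_nonneg_left (Real.abs_cos_le_one _) (by positivity)
    _ = |A| / |x| := by rw [mul_one, ← sq_abs]; field_simp
    _ ≤ |A| / m := by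
        apply div_le_div_of_nonneg_left (abs_nonneg A) hm hxm

/-- Let `a < 0 < b` and `Φ : [a,b] → ℝ` be `C²`. Then there is a constant `C`
(independent of `ε` and `ρ`) such that for all `ε ∈ (0,1]` and all `ρ : ℝ`,
`|∫_a^b (Φ(u) − Φ(0)) cos(ρ ε⁻¹ u)/(u² + ε²) du| ≤ C`. -/
theorem integral_difference_uniform_bound (a b : ℝ) (ha : a < 0) (hb : 0 < b)
    (Φ : ℝ → ℝ) (hΦ : ContDiffOn ℝ 2 Φ (Set.Icc a b)) :
    ∃ C : ℝ, ∀ ε ∈ Set.Ioc (0 : ℝ) 1, ∀ ρ : ℝ,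
      |∫ u in a..b, (Φ u - Φ 0) * Real.cos (ρ * ε⁻¹ * u) / (u ^ 2 + ε ^ 2)| ≤ C := by
  have hab : a < b := ha.trans hb
  have h0s : (0:ℝ) ∈ Set.Icc a b := ⟨ha.le, hb.le⟩
  have hconv : Convex ℝ (Set.Icc a b) := convex_Icc a b
  have huniq : UniqueDiffOn ℝ (Set.Icc a b) := uniqueDiffOn_Icc hab
  set s := Set.Icc a b with hsdef
  set f' := derivWithin Φ s with hf'def
  have hΦd : DifferentiableOn ℝ Φ s := hΦ.differentiableOn (by norm_num)
  have hderiv : ∀ x ∈ s, HasDerivWithinAt Φ (f' x) s x := fun x hx =>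
    (hΦd x hx).hasDerivWithinAt
  have hf'c : ContDiffOn ℝ 1 f' s := hΦ.derivWithin huniq (by norm_num)
  have hf''c : ContinuousOn (derivWithin f' s) s := hf'c.continuousOn_derivWithin huniq le_rfl
  obtain ⟨L0, hL0⟩ := (isCompact_Icc (a := a) (b := b)).exists_bound_of_continuousOn hf''c
  set L := max L0 0 with hLdef
  have hLnn : 0 ≤ L := le_max_right _ _
  have hL : ∀ x ∈ s, ‖derivWithin f' s x‖ ≤ L := fun x hx => (hL0 x hx).trans (le_max_left _ _)
  have hf'd : DifferentiableOn ℝ f' s := hf'c.differentiableOn (by norm_num)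
  have hlip : ∀ u ∈ s, ‖f' u - f' 0‖ ≤ L * ‖u - 0‖ := fun u hu =>
    Convex.norm_image_sub_le_of_norm_hasDerivWithin_le
      (fun x hx => (hf'd x hx).hasDerivWithinAt) hL hconv h0s hu
  set A := f' 0 with hAdef
  -- quadratic Taylor bound
  have hquad : ∀ u ∈ s, |Φ u - Φ 0 - A * u| ≤ L * u ^ 2 := by
    intro u hu
    have hsub : Set.uIcc 0 u ⊆ s := hconv.ordConnected.uIcc_subset h0s hu
    have hg : ∀ x ∈ Set.uIcc 0 u,
        HasDerivWithinAt (fun y => Φ y - Φ 0 - A * y) (f' x - A) (Set.uIcc 0 u) x := by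
      intro x hx
      have h1 := (hderiv x (hsub hx)).mono hsub
      have h2 := ((h1.sub_const (Φ 0)).sub ((hasDerivWithinAt_id x (Set.uIcc 0 u)).const_mul A))
      exact h2.congr_deriv (by simp)
    have hb2 : ∀ x ∈ Set.uIcc 0 u, ‖f' x - A‖ ≤ L * |u| := by
      intro x hx
      have hxu : |x| ≤ |u| := by
        rcases le_total 0 u with h | h
        · rw [Set.uIcc_of_le h] at hx
          rw [abs_of_nonneg hx.1, abs_of_nonneg h]; exact hx.2
        · rw [Set.uIcc_of_ge h] at hx
          rw [abs_of_nonpos hx.2, abs_of_nonpos h]; linarith [hx.1]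
      calc ‖f' x - A‖ ≤ L * ‖x - 0‖ := hlip x (hsub hx)
        _ = L * |x| := by rw [sub_zero, Real.norm_eq_abs]
        _ ≤ L * |u| := mul_le_mul_of_nonneg_left hxu hLnn
    have hkey := Convex.norm_image_sub_le_of_norm_hasDerivWithin_le hg hb2 (convex_uIcc 0 u)
      (Set.left_mem_uIcc) (Set.right_mem_uIcc)
    simp only [mul_zero, sub_zero, Real.norm_eq_abs] at hkey
    calc |Φ u - Φ 0 - A * u| = |(Φ u - Φ 0 - A * u) - (Φ 0 - Φ 0 - 0)| := by ring_nf
      _ ≤ L * |u| * |u| := by simpa using hkey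
      _ = L * u ^ 2 := by rw [mul_assoc, abs_mul_abs_self, sq]
  set m := min (-a) b with hmdef
  have hm : 0 < m := lt_min (neg_pos.mpr ha) hb
  have ham : a ≤ -m := by
    have := min_le_left (-a) b; linarith
  have hmb : m ≤ b := min_le_right _ _
  refine ⟨|A| / m * |(-m) - a| + |A| / m * |b - m| + L * |b - a|, ?_⟩
  rintro ε ⟨hε0, hε1⟩ ρ
  set θ := ρ * ε⁻¹ with hθdef
  have hi1 : ∀ p q : ℝ, IntervalIntegrable
      (fun u => A * u * Real.cos (θ * u) / (u ^ 2 + ε ^ 2)) MeasureTheory.volume p q :=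
    fun p q => (linear_cont A θ ε hε0).intervalIntegrable p q
  have hi2 : IntervalIntegrable
      (fun u => (Φ u - Φ 0 - A * u) * Real.cos (θ * u) / (u ^ 2 + ε ^ 2))
      MeasureTheory.volume a b := by
    apply ContinuousOn.intervalIntegrable
    rw [Set.uIcc_of_le hab.le]
    apply ContinuousOn.div
    · exact ((hΦ.continuousOn.sub continuousOn_const).sub
        (continuousOn_const.mul (continuousOn_id' _))).mul
        ((Real.continuous_cos.comp (continuous_const.mul continuous_id)).continuousOn)
    · exact ((continuous_pow 2).add continuous_const).continuousOn
    · intro x _; positivity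
  have hsplit : (∫ u in a..b, (Φ u - Φ 0) * Real.cos (ρ * ε⁻¹ * u) / (u ^ 2 + ε ^ 2))
      = (∫ u in a..b, A * u * Real.cos (θ * u) / (u ^ 2 + ε ^ 2))
        + ∫ u in a..b, (Φ u - Φ 0 - A * u) * Real.cos (θ * u) / (u ^ 2 + ε ^ 2) := by
    rw [← intervalIntegral.integral_add (hi1 a b) hi2]
    apply intervalIntegral.integral_congr
    intro u _
    show (Φ u - Φ 0) * Real.cos (ρ * ε⁻¹ * u) / (u ^ 2 + ε ^ 2)
      = A * u * Real.cos (θ * u) / (u ^ 2 + ε ^ 2)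
        + (Φ u - Φ 0 - A * u) * Real.cos (θ * u) / (u ^ 2 + ε ^ 2)
    rw [← add_div, hθdef]
    congr 1
    ring
  have e1 : (∫ u in a..(-m), A * u * Real.cos (θ * u) / (u ^ 2 + ε ^ 2))
      + (∫ u in (-m)..b, A * u * Real.cos (θ * u) / (u ^ 2 + ε ^ 2))
      = ∫ u in a..b, A * u * Real.cos (θ * u) / (u ^ 2 + ε ^ 2) :=
    intervalIntegral.integral_add_adjacent_intervals (hi1 a (-m)) (hi1 (-m) b)
  have e2 : (∫ u in (-m)..m, A * u * Real.cos (θ * u) / (u ^ 2 + ε ^ 2))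
      + (∫ u in m..b, A * u * Real.cos (θ * u) / (u ^ 2 + ε ^ 2))
      = ∫ u in (-m)..b, A * u * Real.cos (θ * u) / (u ^ 2 + ε ^ 2) :=
    intervalIntegral.integral_add_adjacent_intervals (hi1 (-m) m) (hi1 m b)
  have hmid := odd_integral_zero A θ ε m
  have hleft : |∫ u in a..(-m), A * u * Real.cos (θ * u) / (u ^ 2 + ε ^ 2)|
      ≤ |A| / m * |(-m) - a| := by
    apply linear_piece_bound A θ ε a (-m) m hε0 hm
    intro x hx
    rw [Set.uIoc_of_le ham] at hx
    rw [abs_of_nonpos (by linarith [hx.2] : x ≤ 0)]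
    linarith [hx.2]
  have hright : |∫ u in m..b, A * u * Real.cos (θ * u) / (u ^ 2 + ε ^ 2)|
      ≤ |A| / m * |b - m| := by
    apply linear_piece_bound A θ ε m b m hε0 hm
    intro x hx
    rw [Set.uIoc_of_le hmb] at hx
    rw [abs_of_pos (lt_trans hm hx.1)]
    exact hx.1.le
  have hB2 : |∫ u in a..b, (Φ u - Φ 0 - A * u) * Real.cos (θ * u) / (u ^ 2 + ε ^ 2)|
      ≤ L * |b - a| := by
    rw [← Real.norm_eq_abs]
    apply intervalIntegral.norm_integral_le_of_norm_le_const
    intro x hx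
    have hxs : x ∈ s := by
      rw [Set.uIoc_of_le hab.le] at hx
      exact ⟨hx.1.le, hx.2⟩
    have hq := hquad x hxs
    have hden : (0:ℝ) < x ^ 2 + ε ^ 2 := by positivity
    calc ‖(Φ x - Φ 0 - A * x) * Real.cos (θ * x) / (x ^ 2 + ε ^ 2)‖
        = |Φ x - Φ 0 - A * x| * |Real.cos (θ * x)| / (x ^ 2 + ε ^ 2) := by
          rw [Real.norm_eq_abs, abs_div, abs_mul, abs_of_pos hden]
      _ ≤ (L * x ^ 2) * 1 / (x ^ 2 + ε ^ 2) := by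
          apply div_le_div₀ (by positivity) _ hden le_rfl
          exact mul_le_mul hq (Real.abs_cos_le_one _) (abs_nonneg _) (by positivity)
      _ ≤ L := by
          rw [mul_one, div_le_iff₀ hden]
          nlinarith [sq_nonneg ε, sq_nonneg x]
  rw [hsplit]
  have h1abs : |∫ u in a..b, A * u * Real.cos (θ * u) / (u ^ 2 + ε ^ 2)|
      ≤ |A| / m * |(-m) - a| + |A| / m * |b - m| := by
    rw [← e1, ← e2, hmid, zero_add]
    exact (abs_add_le _ _).trans (add_le_add hleft hright)
  have habs := abs_add_le (∫ u in a..b, A * u * Real.cos (θ * u) / (u ^ 2 + ε ^ 2))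
    (∫ u in a..b, (Φ u - Φ 0 - A * u) * Real.cos (θ * u) / (u ^ 2 + ε ^ 2))
  linarith
end

section
/- Let $n \geq 1$, $m > 0$, $\lambda^*(y) = \sum_{i=1}^n \sin^2(y^i/2) + m$ on $\mathbb{T}^n$, and $\Omega_k(x,y) = \lambda^*(x) + \lambda^*(y) - \lambda^*(x+y-k) - \lambda^*(k)$. Then for every $k \in \mathbb{T}^n$, the point $(x,y) = (k,k)$ is a critical point of $\Omega_k$, and the determinant of the Hessian of $\Omega_k$ at $(k,k)$ equals $4^{-n} \prod_{i=1}^n (-\cos^2 k^i)$. In particular, if $k^i \equiv \pi/2 \pmod{\pi}$ for some index $i$, then $(k,k)$ is a degenerate critical point of $\Omega_k$. -/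
open Real

/-- The dispersion relation `λ*(y) = Σᵢ sin²(yⁱ/2) + m`. -/
noncomputable def lamStar (n : ℕ) (m : ℝ) (y : Fin n → ℝ) : ℝ :=
  (∑ i, Real.sin (y i / 2) ^ 2) + m

/-- `Ω_k(x, y) = λ*(x) + λ*(y) − λ*(x + y − k) − λ*(k)`, as a function of the combined
variable `w ∈ ℝ^{2n}` with `xⁱ = w (inl i)`, `yⁱ = w (inr i)`. -/
noncomputable def OmegaK (n : ℕ) (m : ℝ) (k : Fin n → ℝ)
    (w : EuclideanSpace ℝ (Fin n ⊕ Fin n)) : ℝ :=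
  lamStar n m (fun i => w (Sum.inl i)) + lamStar n m (fun i => w (Sum.inr i))
    - lamStar n m (fun i => w (Sum.inl i) + w (Sum.inr i) - k i) - lamStar n m k

/-- The Hessian of `Ω_k` at `w`, as the `2n × 2n` matrix of second partial derivatives. -/
noncomputable def hessOmegaK (n : ℕ) (m : ℝ) (k : Fin n → ℝ)
    (w : EuclideanSpace ℝ (Fin n ⊕ Fin n)) :
    Matrix (Fin n ⊕ Fin n) (Fin n ⊕ Fin n) ℝ :=
  fun a b =>
    fderiv ℝ (fun v => fderiv ℝ (OmegaK n m k) v (EuclideanSpace.single b (1 : ℝ))) w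
      (EuclideanSpace.single a (1 : ℝ))

/-- The point `(x, y) = (k, k)` viewed as an element of `ℝ^{2n}`. -/
noncomputable def diagPoint (n : ℕ) (k : Fin n → ℝ) : EuclideanSpace ℝ (Fin n ⊕ Fin n) :=
  (WithLp.equiv 2 ((Fin n ⊕ Fin n) → ℝ)).symm (Sum.elim k k)

namespace DiagAux

variable {n : ℕ}

/-- The coordinate projection as a continuous linear map. -/
noncomputable def P (n : ℕ) (a : Fin n ⊕ Fin n) :
    EuclideanSpace ℝ (Fin n ⊕ Fin n) →L[ℝ] ℝ :=
  EuclideanSpace.proj a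

lemma P_single (a b : Fin n ⊕ Fin n) :
    P n a (EuclideanSpace.single b (1 : ℝ)) = if a = b then 1 else 0 := by
  simp [P, EuclideanSpace.single_apply]

/-- Candidate total derivative of `Ω_k` at `w`. -/
noncomputable def Dmap (n : ℕ) (k : Fin n → ℝ) (w : EuclideanSpace ℝ (Fin n ⊕ Fin n)) :
    EuclideanSpace ℝ (Fin n ⊕ Fin n) →L[ℝ] ℝ :=
  ∑ i : Fin n,
    ((Real.sin (w (Sum.inl i)) / 2) • P n (Sum.inl i)
      + (Real.sin (w (Sum.inr i)) / 2) • P n (Sum.inr i)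
      - (Real.sin (w (Sum.inl i) + w (Sum.inr i) - k i) / 2)
          • (P n (Sum.inl i) + P n (Sum.inr i)))

lemma hasDerivAt_sin_half_sq (t : ℝ) :
    HasDerivAt (fun s : ℝ => Real.sin (s / 2) ^ 2) (Real.sin t / 2) t := by
  have h := (((hasDerivAt_id t).div_const 2).sin.fun_pow 2)
  refine h.congr_deriv ?_
  norm_num only [id_eq, pow_one]
  have hs : Real.sin t = 2 * Real.sin (t / 2) * Real.cos (t / 2) := by
    rw [← Real.sin_two_mul]; ring_nf
  rw [hs]; ring

lemma hasFDerivAt_OmegaK (m : ℝ) (k : Fin n → ℝ) (w : EuclideanSpace ℝ (Fin n ⊕ Fin n)) :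
    HasFDerivAt (OmegaK n m k) (Dmap n k w) w := by
  have hrw : OmegaK n m k = fun w : EuclideanSpace ℝ (Fin n ⊕ Fin n) =>
      (∑ i : Fin n, (Real.sin (w (Sum.inl i) / 2) ^ 2 + Real.sin (w (Sum.inr i) / 2) ^ 2
        - Real.sin ((w (Sum.inl i) + w (Sum.inr i) - k i) / 2) ^ 2))
      + (m - lamStar n m k) := by
    funext w
    simp only [OmegaK, lamStar, Finset.sum_add_distrib, Finset.sum_sub_distrib]
    ring
  rw [hrw]
  refine HasFDerivAt.add_const (m - lamStar n m k) ?_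
  refine HasFDerivAt.fun_sum ?_
  intro i _
  have hx : HasFDerivAt
      (fun w : EuclideanSpace ℝ (Fin n ⊕ Fin n) => Real.sin (w (Sum.inl i) / 2) ^ 2)
      ((Real.sin (w (Sum.inl i)) / 2) • P n (Sum.inl i)) w :=
    (hasDerivAt_sin_half_sq _).comp_hasFDerivAt w (P n (Sum.inl i)).hasFDerivAt
  have hy : HasFDerivAt
      (fun w : EuclideanSpace ℝ (Fin n ⊕ Fin n) => Real.sin (w (Sum.inr i) / 2) ^ 2)
      ((Real.sin (w (Sum.inr i)) / 2) • P n (Sum.inr i)) w :=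
    (hasDerivAt_sin_half_sq _).comp_hasFDerivAt w (P n (Sum.inr i)).hasFDerivAt
  have hin : HasFDerivAt
      (fun w : EuclideanSpace ℝ (Fin n ⊕ Fin n) => w (Sum.inl i) + w (Sum.inr i) - k i)
      (P n (Sum.inl i) + P n (Sum.inr i)) w :=
    ((P n (Sum.inl i)).hasFDerivAt.add (P n (Sum.inr i)).hasFDerivAt).sub_const (k i)
  have hz : HasFDerivAt
      (fun w : EuclideanSpace ℝ (Fin n ⊕ Fin n) =>
        Real.sin ((w (Sum.inl i) + w (Sum.inr i) - k i) / 2) ^ 2)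
      ((Real.sin (w (Sum.inl i) + w (Sum.inr i) - k i) / 2)
        • (P n (Sum.inl i) + P n (Sum.inr i))) w :=
    (hasDerivAt_sin_half_sq _).comp_hasFDerivAt w hin
  exact (hx.add hy).sub hz

lemma diagPoint_inl (k : Fin n → ℝ) (i : Fin n) : diagPoint n k (Sum.inl i) = k i := rfl
lemma diagPoint_inr (k : Fin n → ℝ) (i : Fin n) : diagPoint n k (Sum.inr i) = k i := rfl

lemma Dmap_diag (k : Fin n → ℝ) : Dmap n k (diagPoint n k) = 0 := by
  unfold Dmap
  apply Finset.sum_eq_zero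
  intro i _
  rw [diagPoint_inl, diagPoint_inr]
  have h : k i + k i - k i = k i := by ring
  rw [h, smul_add]
  abel

lemma Dmap_single_inl (k : Fin n → ℝ) (v : EuclideanSpace ℝ (Fin n ⊕ Fin n)) (j : Fin n) :
    Dmap n k v (EuclideanSpace.single (Sum.inl j) (1 : ℝ))
      = Real.sin (v (Sum.inl j)) / 2
        - Real.sin (v (Sum.inl j) + v (Sum.inr j) - k j) / 2 := by
  unfold Dmap
  rw [ContinuousLinearMap.sum_apply, Finset.sum_eq_single j]
  · simp [P_single]
  · intro i _ hij
    simp [P_single, hij]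
  · simp

lemma Dmap_single_inr (k : Fin n → ℝ) (v : EuclideanSpace ℝ (Fin n ⊕ Fin n)) (j : Fin n) :
    Dmap n k v (EuclideanSpace.single (Sum.inr j) (1 : ℝ))
      = Real.sin (v (Sum.inr j)) / 2
        - Real.sin (v (Sum.inl j) + v (Sum.inr j) - k j) / 2 := by
  unfold Dmap
  rw [ContinuousLinearMap.sum_apply, Finset.sum_eq_single j]
  · simp [P_single]
  · intro i _ hij
    simp [P_single, hij]
  · simp

/-- The diagonal entries `−cos(kⁱ)/2` of the off-diagonal blocks of the Hessian. -/
noncomputable def dd (k : Fin n → ℝ) (i : Fin n) : ℝ := -(Real.cos (k i) / 2)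

lemma hess_eq (m : ℝ) (k : Fin n → ℝ) :
    hessOmegaK n m k (diagPoint n k)
      = Matrix.fromBlocks 0 (Matrix.diagonal (dd k)) (Matrix.diagonal (dd k)) 0 := by
  funext a b
  have hin : ∀ j : Fin n, HasFDerivAt
      (fun v : EuclideanSpace ℝ (Fin n ⊕ Fin n) => v (Sum.inl j) + v (Sum.inr j) - k j)
      (P n (Sum.inl j) + P n (Sum.inr j)) (diagPoint n k) := fun j =>
    ((P n (Sum.inl j)).hasFDerivAt.add (P n (Sum.inr j)).hasFDerivAt).sub_const (k j)
  have he : ∀ j : Fin n,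
      (k j : ℝ) = (diagPoint n k) (Sum.inl j) + (diagPoint n k) (Sum.inr j) - k j := by
    intro j; rw [diagPoint_inl, diagPoint_inr]; ring
  have hz : ∀ j : Fin n, HasFDerivAt
      (fun v : EuclideanSpace ℝ (Fin n ⊕ Fin n) =>
        Real.sin (v (Sum.inl j) + v (Sum.inr j) - k j) / 2)
      ((Real.cos (k j) / 2) • (P n (Sum.inl j) + P n (Sum.inr j))) (diagPoint n k) := fun j =>
    ((Real.hasDerivAt_sin (k j)).div_const 2).comp_hasFDerivAt_of_eq _ (hin j) (he j)
  cases b with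
  | inl j =>
    have hfun : (fun v : EuclideanSpace ℝ (Fin n ⊕ Fin n) =>
        fderiv ℝ (OmegaK n m k) v (EuclideanSpace.single (Sum.inl j) (1 : ℝ)))
        = fun v => Real.sin (v (Sum.inl j)) / 2
            - Real.sin (v (Sum.inl j) + v (Sum.inr j) - k j) / 2 :=
      funext fun v => by rw [(hasFDerivAt_OmegaK m k v).fderiv, Dmap_single_inl]
    have h1 : HasFDerivAt
        (fun v : EuclideanSpace ℝ (Fin n ⊕ Fin n) => Real.sin (v (Sum.inl j)) / 2)
        ((Real.cos (k j) / 2) • P n (Sum.inl j)) (diagPoint n k) :=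
      ((Real.hasDerivAt_sin (k j)).div_const 2).comp_hasFDerivAt_of_eq _
        (P n (Sum.inl j)).hasFDerivAt rfl
    have hcol := h1.fun_sub (hz j)
    show fderiv ℝ _ (diagPoint n k) (EuclideanSpace.single a (1 : ℝ)) = _
    rw [hfun, hcol.fderiv]
    cases a with
    | inl i =>
      simp [P_single, Matrix.fromBlocks]
    | inr i =>
      by_cases hij : i = j
      · subst hij
        simp [P_single, Matrix.fromBlocks, Matrix.diagonal, dd]
      · have hji : ¬ j = i := fun h => hij h.symm
        simp [P_single, Matrix.fromBlocks, Matrix.diagonal, hij, hji]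
  | inr j =>
    have hfun : (fun v : EuclideanSpace ℝ (Fin n ⊕ Fin n) =>
        fderiv ℝ (OmegaK n m k) v (EuclideanSpace.single (Sum.inr j) (1 : ℝ)))
        = fun v => Real.sin (v (Sum.inr j)) / 2
            - Real.sin (v (Sum.inl j) + v (Sum.inr j) - k j) / 2 :=
      funext fun v => by rw [(hasFDerivAt_OmegaK m k v).fderiv, Dmap_single_inr]
    have h1 : HasFDerivAt
        (fun v : EuclideanSpace ℝ (Fin n ⊕ Fin n) => Real.sin (v (Sum.inr j)) / 2)
        ((Real.cos (k j) / 2) • P n (Sum.inr j)) (diagPoint n k) :=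
      ((Real.hasDerivAt_sin (k j)).div_const 2).comp_hasFDerivAt_of_eq _
        (P n (Sum.inr j)).hasFDerivAt rfl
    have hcol := h1.fun_sub (hz j)
    show fderiv ℝ _ (diagPoint n k) (EuclideanSpace.single a (1 : ℝ)) = _
    rw [hfun, hcol.fderiv]
    cases a with
    | inl i =>
      by_cases hij : i = j
      · subst hij
        simp [P_single, Matrix.fromBlocks, Matrix.diagonal, dd]
      · have hji : ¬ j = i := fun h => hij h.symm
        simp [P_single, Matrix.fromBlocks, Matrix.diagonal, hij, hji]
    | inr i =>
      simp [P_single, Matrix.fromBlocks]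

/-- Reindexing equivalence pairing the `x` and `y` copies of each coordinate. -/
def e2 (n : ℕ) : Fin 2 × Fin n ≃ (Fin n ⊕ Fin n) where
  toFun p := if p.1 = 0 then Sum.inl p.2 else Sum.inr p.2
  invFun x := Sum.elim (fun i => ((0 : Fin 2), i)) (fun i => ((1 : Fin 2), i)) x
  left_inv p := by rcases p with ⟨b, i⟩; fin_cases b <;> simp
  right_inv x := by rcases x with i | i <;> simp

lemma det_special (d : Fin n → ℝ) :
    (Matrix.fromBlocks (0 : Matrix (Fin n) (Fin n) ℝ) (Matrix.diagonal d)
      (Matrix.diagonal d) 0).det = ∏ i : Fin n, -(d i ^ 2) := by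
  have hM : Matrix.fromBlocks (0 : Matrix (Fin n) (Fin n) ℝ) (Matrix.diagonal d)
      (Matrix.diagonal d) 0
      = (Matrix.blockDiagonal (fun i : Fin n => !![0, d i; d i, 0])).submatrix
          (e2 n).symm (e2 n).symm := by
    funext a b
    rcases a with i | i <;> rcases b with j | j <;> by_cases hij : i = j
    all_goals first
      | (subst hij; simp [e2, Matrix.blockDiagonal_apply, Matrix.fromBlocks, Matrix.diagonal])
      | (have hji : ¬ j = i := fun h => hij h.symm
         simp [e2, Matrix.blockDiagonal_apply, Matrix.fromBlocks, Matrix.diagonal, hij, hji])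
  rw [hM, Matrix.det_submatrix_equiv_self, Matrix.det_blockDiagonal]
  refine Finset.prod_congr rfl fun i _ => ?_
  rw [Matrix.det_fin_two_of]
  ring

end DiagAux

open DiagAux in
/-- For every `k`, the point `(k,k)` is a critical point of `Ω_k`, and the determinant of
the Hessian there equals `4⁻ⁿ ∏ᵢ (−cos² kⁱ)`. In particular, if `kⁱ ≡ π/2 (mod π)` for
some `i`, then `(k,k)` is a degenerate critical point. -/
theorem diag_critical_and_degenerate (n : ℕ) (hn : 1 ≤ n) (m : ℝ) (hm : 0 < m)
    (k : Fin n → ℝ) :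
    fderiv ℝ (OmegaK n m k) (diagPoint n k) = 0 ∧
    (hessOmegaK n m k (diagPoint n k)).det =
      ((4 : ℝ) ^ n)⁻¹ * ∏ i : Fin n, -(Real.cos (k i)) ^ 2 ∧
    ((∃ i : Fin n, ∃ j : ℤ, k i = π / 2 + π * j) →
      (hessOmegaK n m k (diagPoint n k)).det = 0) := by
  have hdet : (hessOmegaK n m k (diagPoint n k)).det =
      ((4 : ℝ) ^ n)⁻¹ * ∏ i : Fin n, -(Real.cos (k i)) ^ 2 := by
    rw [hess_eq, det_special]
    have h : ∀ i : Fin n, -(dd k i ^ 2) = (4 : ℝ)⁻¹ * (-(Real.cos (k i)) ^ 2) := by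
      intro i; simp only [dd]; ring
    rw [Finset.prod_congr rfl fun i _ => h i, Finset.prod_mul_distrib,
      Finset.prod_const, Finset.card_univ, Fintype.card_fin, inv_pow]
  refine ⟨?_, hdet, ?_⟩
  · rw [(hasFDerivAt_OmegaK m k _).fderiv, Dmap_diag]
  · rintro ⟨i, j, hij⟩
    have hcos : Real.cos (k i) = 0 := by
      rw [hij, Real.cos_add, Real.cos_pi_div_two, Real.sin_pi_div_two,
        mul_comm π (j : ℝ), Real.sin_int_mul_pi]
      ring
    rw [hdet, Finset.prod_eq_zero (Finset.mem_univ i) (by rw [hcos]; ring), mul_zero]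
end
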